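/- arXiv:2412.04579 — 5 statements merged into one kernel-verified Lean document; each statement's English description precedes it below -/
import Mathlib

section
/- Let r ≥ 1, n ≥ 1, and let T be an (rn)×(rn) real symmetric block tridiagonal matrix with r×r symmetric diagonal blocks A_1,…,A_n and r×r upper off-diagonal blocks B_1,…,B_{n−1}, where each B_j is lower triangular with strictly positive diagonal entries (so the (j,j+1) block of T is B_j and the (j+1,j) block is B_jᵀ). Suppose T = Q D Qᵀ where Q is an (rn)×(rn) real orthogonal matrix, D is the diagonal matrix with diagonal entries λ_1,…,λ_{rn}, so the columns of Q are normalized eigenvectors of T. Then ∏_{j=1}^{n−1} det(B_j)^{n−j} = |det M(λ, Q_r)|, where Q_r is the r×(rn) submatrix consisting of the first r rows of Q. -/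
open scoped BigOperators
open Matrix

/-- The block index (0-based) of a row/column index of an `(rn)×(rn)` block matrix. -/
def blkIdx (r n : ℕ) (hr : 0 < r) (i : Fin (r * n)) : Fin n :=
  ⟨i.val / r, (Nat.div_lt_iff_lt_mul hr).mpr (by rw [Nat.mul_comm n r]; exact i.isLt)⟩

/-- The index within a block (0-based). -/
def inIdx (r n : ℕ) (hr : 0 < r) (i : Fin (r * n)) : Fin r :=
  ⟨i.val % r, Nat.mod_lt _ hr⟩

/-- `M(λ,X)`: the `(rn)×(rn)` matrix with `(i,j)` entry
`λ_i^{⌊(j−1)/r⌋} · X_{j − r⌊(j−1)/r⌋, i}` (written 0-based). -/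
def MagicM (r n : ℕ) (hr : 0 < r) (lam : Fin (r * n) → ℝ)
    (X : Matrix (Fin r) (Fin (r * n)) ℝ) : Matrix (Fin (r * n)) (Fin (r * n)) ℝ :=
  Matrix.of fun i j => lam i ^ (j.val / r) * X ⟨j.val % r, Nat.mod_lt _ hr⟩ i

/-- The `r × rn` submatrix consisting of the first `r` rows of an `(rn)×(rn)` matrix. -/
def topRows (r n : ℕ) (hn : 0 < n) (Q : Matrix (Fin (r * n)) (Fin (r * n)) ℝ) :
    Matrix (Fin r) (Fin (r * n)) ℝ :=
  Matrix.of fun m a => Q ⟨m.val, lt_of_lt_of_le m.isLt (Nat.le_mul_of_pos_right r hn)⟩ a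

namespace MagicAux

/-- The element of `Fin (r*n)` in block `k`, position `p`. -/
def ix (r n : ℕ) (hr : 0 < r) (k : Fin n) (p : Fin r) : Fin (r * n) :=
  ⟨k.val * r + p.val, by
    have h1 : k.val * r + p.val < (k.val + 1) * r := by
      rw [add_mul, one_mul]; omega
    have h2 : (k.val + 1) * r ≤ n * r := Nat.mul_le_mul_right r k.isLt
    rw [mul_comm r n]; exact lt_of_lt_of_le h1 h2⟩

lemma blkIdx_ix {r n : ℕ} (hr : 0 < r) (k : Fin n) (p : Fin r) :
    blkIdx r n hr (ix r n hr k p) = k := by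
  ext
  show (k.val * r + p.val) / r = k.val
  rw [Nat.add_comm, Nat.add_mul_div_right _ _ hr, Nat.div_eq_of_lt p.isLt, Nat.zero_add]

lemma inIdx_ix {r n : ℕ} (hr : 0 < r) (k : Fin n) (p : Fin r) :
    inIdx r n hr (ix r n hr k p) = p := by
  ext
  show (k.val * r + p.val) % r = p.val
  rw [Nat.add_comm, Nat.add_mul_mod_self_right, Nat.mod_eq_of_lt p.isLt]

lemma ix_blk_in {r n : ℕ} (hr : 0 < r) (i : Fin (r * n)) :
    ix r n hr (blkIdx r n hr i) (inIdx r n hr i) = i := by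
  ext
  show i.val / r * r + i.val % r = i.val
  rw [Nat.mul_comm]
  exact Nat.div_add_mod _ _

/-- The equivalence `Fin n × Fin r ≃ Fin (r*n)` given by blocks. -/
def blkEquiv (r n : ℕ) (hr : 0 < r) : Fin n × Fin r ≃ Fin (r * n) where
  toFun := fun kp => ix r n hr kp.1 kp.2
  invFun := fun i => (blkIdx r n hr i, inIdx r n hr i)
  left_inv := fun kp => by simp [blkIdx_ix, inIdx_ix]
  right_inv := fun i => ix_blk_in hr i

lemma sum_blocks {r n : ℕ} (hr : 0 < r) (f : Fin (r * n) → ℝ) :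
    ∑ a, f a = ∑ k : Fin n, ∑ p : Fin r, f (ix r n hr k p) := by
  rw [← Equiv.sum_comp (blkEquiv r n hr) f]
  exact Fintype.sum_prod_type _

/-- The ordered product `B' 0 * B' 1 * ⋯ * B' (k-1)`. -/
def Cmat {r : ℕ} (B' : ℕ → Matrix (Fin r) (Fin r) ℝ) : ℕ → Matrix (Fin r) (Fin r) ℝ
  | 0 => 1
  | k + 1 => Cmat B' k * B' k

lemma det_Cmat {r : ℕ} (B' : ℕ → Matrix (Fin r) (Fin r) ℝ) (k : ℕ) :
    (Cmat B' k).det = ∏ j ∈ Finset.range k, (B' j).det := by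
  induction k with
  | zero => simp [Cmat]
  | succ k ih => rw [Cmat, Matrix.det_mul, ih, Finset.prod_range_succ]

end MagicAux

open MagicAux

section Main

variable {r n : ℕ} (hr : 0 < r) (hn : 0 < n)
variable (T : Matrix (Fin (r * n)) (Fin (r * n)) ℝ)

/-- Powers of a block-tridiagonal matrix vanish far from the diagonal. -/
lemma pow_block_zero
    (hT0 : ∀ i j : Fin (r * n),
      (blkIdx r n hr i).val + 1 < (blkIdx r n hr j).val ∨
      (blkIdx r n hr j).val + 1 < (blkIdx r n hr i).val → T i j = 0) :
    ∀ k : ℕ, ∀ i j : Fin (r * n),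
      (blkIdx r n hr i).val + k < (blkIdx r n hr j).val → (T ^ k) i j = 0 := by
  intro k
  induction k with
  | zero =>
    intro i j h
    rw [pow_zero]
    apply Matrix.one_apply_ne
    intro hij; rw [hij] at h; omega
  | succ k ih =>
    intro i j h
    rw [pow_succ, Matrix.mul_apply]
    apply Finset.sum_eq_zero
    intro a _
    by_cases ha : (blkIdx r n hr i).val + k < (blkIdx r n hr a).val
    · rw [ih i a ha, zero_mul]
    · rw [hT0 a j (by omega), mul_zero]

end Main

theorem statement0 (r n : ℕ) (hr : 0 < r) (hn : 0 < n)
    (A : Fin n → Matrix (Fin r) (Fin r) ℝ)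
    (B : Fin (n - 1) → Matrix (Fin r) (Fin r) ℝ)
    (hA : ∀ k, (A k).IsSymm)
    (hBlow : ∀ k, ∀ i j : Fin r, i < j → B k i j = 0)
    (hBpos : ∀ k, ∀ i : Fin r, 0 < B k i i)
    (T : Matrix (Fin (r * n)) (Fin (r * n)) ℝ)
    (hT : ∀ i j : Fin (r * n), T i j =
      if (blkIdx r n hr i).val = (blkIdx r n hr j).val then
        A (blkIdx r n hr i) (inIdx r n hr i) (inIdx r n hr j)
      else if h2 : (blkIdx r n hr i).val + 1 = (blkIdx r n hr j).val then
        B ⟨(blkIdx r n hr i).val, by have := (blkIdx r n hr j).isLt; omega⟩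
          (inIdx r n hr i) (inIdx r n hr j)
      else if h3 : (blkIdx r n hr j).val + 1 = (blkIdx r n hr i).val then
        B ⟨(blkIdx r n hr j).val, by have := (blkIdx r n hr i).isLt; omega⟩
          (inIdx r n hr j) (inIdx r n hr i)
      else 0)
    (lam : Fin (r * n) → ℝ)
    (Q : Matrix (Fin (r * n)) (Fin (r * n)) ℝ)
    (hQ : Q * Qᵀ = 1)
    (hTQ : T = Q * Matrix.diagonal lam * Qᵀ) :
    ∏ k : Fin (n - 1), (B k).det ^ (n - 1 - k.val) =
      |(MagicM r n hr lam (topRows r n hn Q)).det| := by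
  classical
  -- far-off-diagonal entries of T vanish
  have hT0 : ∀ i j : Fin (r * n),
      (blkIdx r n hr i).val + 1 < (blkIdx r n hr j).val ∨
      (blkIdx r n hr j).val + 1 < (blkIdx r n hr i).val → T i j = 0 := by
    intro i j h
    rw [hT]
    rw [if_neg (by omega), dif_neg (by omega), dif_neg (by omega)]
  have hpbz := pow_block_zero hr T hT0
  -- extended off-diagonal blocks
  set B' : ℕ → Matrix (Fin r) (Fin r) ℝ :=
    fun k => if h : k < n - 1 then B ⟨k, h⟩ else 1 with hB'
  set z : Fin n := ⟨0, hn⟩ with hz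
  -- top-left block of T^k
  have hpowdiag : ∀ k : ℕ, ∀ hk : k < n, ∀ m q : Fin r,
      (T ^ k) (ix r n hr z m) (ix r n hr ⟨k, hk⟩ q) = Cmat B' k m q := by
    intro k
    induction k with
    | zero =>
      intro hk m q
      rw [pow_zero]
      show (1 : Matrix (Fin (r * n)) (Fin (r * n)) ℝ) _ _ = (1 : Matrix (Fin r) (Fin r) ℝ) m q
      have hix : (ix r n hr z m = ix r n hr ⟨0, hk⟩ q) ↔ m = q := by
        constructor
        · intro h
          have := congrArg (inIdx r n hr) h
          rwa [inIdx_ix, inIdx_ix] at this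
        · intro h; subst h; rfl
      simp only [Matrix.one_apply, hix]
    | succ k ih =>
      intro hk m q
      have hkn : k < n := by omega
      rw [pow_succ, Matrix.mul_apply, sum_blocks hr]
      have hzero : ∀ b : Fin n, b ∈ Finset.univ → b ≠ ⟨k, hkn⟩ →
          ∑ p : Fin r, (T ^ k) (ix r n hr z m) (ix r n hr b p) *
            T (ix r n hr b p) (ix r n hr ⟨k + 1, hk⟩ q) = 0 := by
        intro b _ hb
        apply Finset.sum_eq_zero
        intro p _
        by_cases hbk : b.val ≤ k
        · have hbk' : b.val < k := lt_of_le_of_ne hbk (by intro h; apply hb; ext; exact h)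
          have hz2 : T (ix r n hr b p) (ix r n hr ⟨k + 1, hk⟩ q) = 0 := by
            apply hT0
            rw [blkIdx_ix, blkIdx_ix]
            left
            show b.val + 1 < k + 1
            omega
          rw [hz2, mul_zero]
        · have hz1 : (T ^ k) (ix r n hr z m) (ix r n hr b p) = 0 := by
            apply hpbz
            rw [blkIdx_ix, blkIdx_ix]
            show (0 : ℕ) + k < b.val
            omega
          rw [hz1, zero_mul]
      rw [Finset.sum_eq_single_of_mem (⟨k, hkn⟩ : Fin n) (Finset.mem_univ _) hzero]
      have hsum : ∀ p : Fin r,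
          (T ^ k) (ix r n hr z m) (ix r n hr ⟨k, hkn⟩ p) *
            T (ix r n hr ⟨k, hkn⟩ p) (ix r n hr ⟨k + 1, hk⟩ q)
          = Cmat B' k m p * B' k p q := by
        intro p
        rw [ih hkn m p]
        congr 1
        rw [hT]
        simp only [blkIdx_ix, inIdx_ix]
        rw [if_neg (by simp), dif_pos (by simp)]
        have hBk : B' k = B ⟨k, by omega⟩ := by
          simp only [hB']
          rw [dif_pos]
        rw [hBk]
      rw [Finset.sum_congr rfl fun p _ => hsum p]
      show _ = (Cmat B' k * B' k) m q
      rw [Matrix.mul_apply]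
  -- Q is orthogonal on both sides
  have hQ' : Qᵀ * Q = 1 := mul_eq_one_comm.mp hQ
  -- T^k * Q = Q * diagonal (lam^k)
  have hTQpow : ∀ k : ℕ, (T ^ k) * Q = Q * Matrix.diagonal (fun i => lam i ^ k) := by
    intro k
    induction k with
    | zero => simp [Matrix.diagonal_one]
    | succ k ih =>
      have hTQ1 : T * Q = Q * Matrix.diagonal lam := by
        rw [hTQ, Matrix.mul_assoc, Matrix.mul_assoc, hQ', Matrix.mul_one]
      rw [pow_succ, Matrix.mul_assoc, hTQ1, ← Matrix.mul_assoc, ih,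
        Matrix.mul_assoc, Matrix.diagonal_mul_diagonal]
      congr 1
  -- the matrix S with row blocks = top rows of T^k
  set S : Matrix (Fin (r * n)) (Fin (r * n)) ℝ :=
    Matrix.of fun i j => (T ^ (blkIdx r n hr i).val) (ix r n hr z (inIdx r n hr i)) j with hS
  -- M = (S * Q)ᵀ
  have hM : MagicM r n hr lam (topRows r n hn Q) = (S * Q)ᵀ := by
    ext i j
    show lam i ^ (j.val / r) * Q _ i = (S * Q) j i
    rw [Matrix.mul_apply]
    have : ∀ a, S j a * Q a i =
        (T ^ (blkIdx r n hr j).val) (ix r n hr z (inIdx r n hr j)) a * Q a i :=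
      fun a => rfl
    rw [Finset.sum_congr rfl fun a _ => this a]
    have : ∑ a, (T ^ (blkIdx r n hr j).val) (ix r n hr z (inIdx r n hr j)) a * Q a i
        = ((T ^ (blkIdx r n hr j).val) * Q) (ix r n hr z (inIdx r n hr j)) i := by
      rw [Matrix.mul_apply]
    rw [this, hTQpow, Matrix.mul_diagonal]
    have hval : (ix r n hr z (inIdx r n hr j)).val = j.val % r := by
      show (z : Fin n).val * r + _ = _
      rw [hz]; simp [inIdx]
    have hQeq : Q (ix r n hr z (inIdx r n hr j)) i
        = Q ⟨j.val % r, lt_of_lt_of_le (Nat.mod_lt _ hr) (Nat.le_mul_of_pos_right r hn)⟩ i := by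
      congr 1
      ext
      exact hval
    rw [hQeq]
    show lam i ^ (j.val / r) * _ = _ * lam i ^ (blkIdx r n hr j).val
    rw [mul_comm]
    rfl
  -- S is block lower triangular
  have hStri : Sᵀ.BlockTriangular (blkIdx r n hr) := by
    intro i j hji
    show S j i = 0
    show (T ^ (blkIdx r n hr j).val) (ix r n hr z (inIdx r n hr j)) i = 0
    apply hpbz
    rw [blkIdx_ix]
    rw [hz]
    show 0 + (blkIdx r n hr j).val < (blkIdx r n hr i).val
    rw [Nat.zero_add]
    exact hji
  -- determinant of each diagonal square block of Sᵀ
  have hblockdet : ∀ a : Fin n,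
      (Sᵀ.toSquareBlock (blkIdx r n hr) a).det = (Cmat B' a.val).det := by
    intro a
    let ea : Fin r ≃ { i // blkIdx r n hr i = a } :=
      { toFun := fun p => ⟨ix r n hr a p, blkIdx_ix hr a p⟩
        invFun := fun i => inIdx r n hr i.val
        left_inv := fun p => inIdx_ix hr a p
        right_inv := fun i => by
          ext
          show (ix r n hr a (inIdx r n hr i.val)).val = (i : Fin (r * n)).val
          conv_rhs => rw [← ix_blk_in hr i.val]
          rw [i.2] }
    rw [← Matrix.det_submatrix_equiv_self ea]
    have : ((Sᵀ.toSquareBlock (blkIdx r n hr) a).submatrix ea ea) = (Cmat B' a.val)ᵀ := by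
      ext m p
      show S (ix r n hr a p) (ix r n hr a m) = (Cmat B' a.val) p m
      show (T ^ (blkIdx r n hr (ix r n hr a p)).val)
          (ix r n hr z (inIdx r n hr (ix r n hr a p))) (ix r n hr a m) = _
      rw [blkIdx_ix, inIdx_ix]
      exact hpowdiag a.val a.isLt p m
    rw [this, Matrix.det_transpose]
  -- determinant of S
  have hdetS : S.det = ∏ a : Fin n, ∏ j ∈ Finset.range a.val, (B' j).det := by
    rw [← Matrix.det_transpose]
    rw [hStri.det_fintype]
    exact Finset.prod_congr rfl fun a _ => by rw [hblockdet a, det_Cmat]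
  -- positivity of det B'
  have hdB' : ∀ j, 0 < (B' j).det := by
    intro j
    simp only [hB']
    by_cases h : j < n - 1
    · rw [dif_pos h]
      have hupper : (B ⟨j, h⟩)ᵀ.BlockTriangular id := by
        intro p q hpq
        exact hBlow _ _ _ hpq
      have := Matrix.det_of_upperTriangular hupper
      rw [Matrix.det_transpose] at this
      rw [this]
      apply Finset.prod_pos
      intro p _
      exact hBpos _ p
    · rw [dif_neg h, Matrix.det_one]; exact one_pos
  have hdetSpos : 0 < S.det := by
    rw [hdetS]
    apply Finset.prod_pos
    intro a _
    apply Finset.prod_pos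
    intro j _
    exact hdB' j
  -- |det Q| = 1
  have hdetQ : |Q.det| = 1 := by
    have : Q.det * Q.det = 1 := by
      have := congrArg Matrix.det hQ
      rwa [Matrix.det_mul, Matrix.det_transpose, Matrix.det_one] at this
    nlinarith [abs_nonneg Q.det, sq_abs Q.det, abs_mul_abs_self Q.det]
  -- combinatorial identity
  have hcomb : ∀ N : ℕ, ∀ d : ℕ → ℝ,
      ∏ a ∈ Finset.range N, ∏ j ∈ Finset.range a, d j
        = ∏ j ∈ Finset.range N, d j ^ (N - 1 - j) := by
    intro N
    induction N with
    | zero => intro d; simp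
    | succ N ih =>
      intro d
      rw [Finset.prod_range_succ, ih d]
      rw [Finset.prod_range_succ (f := fun j => d j ^ (N + 1 - 1 - j))]
      have h1 : d N ^ (N + 1 - 1 - N) = 1 := by
        have : N + 1 - 1 - N = 0 := by omega
        rw [this, pow_zero]
      rw [h1, mul_one]
      rw [← Finset.prod_mul_distrib]
      apply Finset.prod_congr rfl
      intro j hj
      rw [Finset.mem_range] at hj
      rw [← pow_succ]
      congr 1
      omega
  -- putting it together
  rw [hM, Matrix.det_transpose, Matrix.det_mul, abs_mul, hdetQ, mul_one]
  rw [abs_of_pos hdetSpos, hdetS]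
  rw [Fin.prod_univ_eq_prod_range (fun a => ∏ j ∈ Finset.range a, (B' j).det) n]
  rw [hcomb n (fun j => (B' j).det)]
  -- reduce range n to range (n-1)
  have hsplit : ∏ j ∈ Finset.range n, (B' j).det ^ (n - 1 - j)
      = ∏ j ∈ Finset.range (n - 1), (B' j).det ^ (n - 1 - j) := by
    have h2 : n = (n - 1) + 1 := by omega
    rw [h2, Finset.prod_range_succ]
    have h3 : (n - 1) + 1 - 1 - (n - 1) = 0 := by omega
    rw [h3, pow_zero, mul_one]
    simp
  rw [hsplit]
  rw [← Fin.prod_univ_eq_prod_range (fun j => (B' j).det ^ (n - 1 - j)) (n - 1)]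
  apply Finset.prod_congr rfl
  intro k _
  have hBk : B' k.val = B k := by
    simp only [hB']
    rw [dif_pos k.isLt]
  rw [hBk]
end

section
/- Let n ≥ 2 and let λ_1,…,λ_{2n} be real numbers. Then Σ_{A ⊆ {1,…,2n}, |A| = n} Δ(A)⁴ Δ(A')⁴ = 2^{−n} · ( Σ_{A ⊆ {1,…,2n}, |A| = n} Δ(A)² Δ(A')² )², where A' denotes the complement of A in {1,…,2n}. -/
open scoped BigOperators

/-- `Δ(A)`: the Vandermonde product `∏_{i,j ∈ A, i<j} (λ_j − λ_i)`. -/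
def vdm {N : ℕ} (lam : Fin N → ℝ) (A : Finset (Fin N)) : ℝ :=
  ∏ p ∈ (A ×ˢ A).filter fun p => p.1 < p.2, (lam p.2 - lam p.1)

namespace Stmt9
open Finset MvPolynomial

noncomputable section

variable {N M : ℕ}

def W (lam : Fin N → ℝ) (A : Finset (Fin N)) : ℝ :=
  ∏ p ∈ A.offDiag, (lam p.2 - lam p.1)

def WP (A : Finset (Fin N)) : MvPolynomial (Fin N) ℝ :=
  ∏ p ∈ A.offDiag, (X p.2 - X p.1)

lemma eval_WP (lam : Fin N → ℝ) (A : Finset (Fin N)) : eval lam (WP A) = W lam A := by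
  simp [WP, W]

lemma W_eq_zero (lam : Fin N → ℝ) {A : Finset (Fin N)} {i j : Fin N} (hij : i ≠ j)
    (hi : i ∈ A) (hj : j ∈ A) (h : lam i = lam j) : W lam A = 0 := by
  apply Finset.prod_eq_zero (i := (j, i))
  · simp [Finset.mem_offDiag, hi, hj, hij.symm]
  · simp [h]

lemma W_insert (lam : Fin N → ℝ) {B : Finset (Fin N)} {i : Fin N} (hi : i ∉ B) :
    W lam (insert i B) =
      (∏ k ∈ B, ((lam k - lam i) * (lam i - lam k))) * W lam B := by
  unfold W
  rw [Finset.offDiag_insert hi]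
  rw [Finset.prod_union, Finset.prod_union]
  · rw [Finset.singleton_product, Finset.product_singleton, Finset.prod_map, Finset.prod_map]
    simp only [Function.Embedding.coeFn_mk]
    rw [Finset.prod_mul_distrib]
    ring
  · rw [Finset.disjoint_left]
    rintro ⟨a, b⟩ hab hab'
    simp only [Finset.mem_product, Finset.mem_singleton, Finset.mem_offDiag] at hab hab'
    obtain ⟨rfl, hb⟩ := hab'
    exact hi hab.1
  · rw [Finset.disjoint_left]
    rintro ⟨a, b⟩ hab hab'
    simp only [Finset.mem_union, Finset.mem_product, Finset.mem_singleton,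
      Finset.mem_offDiag] at hab hab'
    obtain ⟨ha, rfl⟩ := hab'
    rcases hab with h1 | h1
    · exact hi h1.2.1
    · exact hi (h1.1 ▸ ha)

lemma W_image (f : Fin M → Fin N) (hf : Function.Injective f) (lam : Fin N → ℝ)
    (B : Finset (Fin M)) : W lam (B.image f) = W (lam ∘ f) B := by
  unfold W
  refine (Finset.prod_bij (fun (p : Fin M × Fin M) _ => (f p.1, f p.2)) ?_ ?_ ?_ ?_).symm
  · rintro ⟨a, b⟩ hab
    simp only [Finset.mem_offDiag] at hab ⊢
    exact ⟨Finset.mem_image_of_mem f hab.1, Finset.mem_image_of_mem f hab.2.1,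
      fun h => hab.2.2 (hf h)⟩
  · rintro ⟨a, b⟩ _ ⟨c, d⟩ _ h
    simp only [Prod.mk.injEq] at h
    exact Prod.ext (hf h.1) (hf h.2)
  · rintro ⟨a, b⟩ hab
    simp only [Finset.mem_offDiag, Finset.mem_image] at hab
    obtain ⟨⟨x, hx, hxa⟩, ⟨y, hy, hyb⟩, hne⟩ := hab
    refine ⟨(x, y), ?_, by simp [hxa, hyb]⟩
    simp only [Finset.mem_offDiag]
    exact ⟨hx, hy, fun h => hne (by rw [← hxa, ← hyb, h])⟩
  · rintro ⟨a, b⟩ _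
    rfl

/-- pairs with first < second -/
def LT (A : Finset (Fin N)) : Finset (Fin N × Fin N) :=
  A.offDiag.filter fun p => p.1 < p.2

lemma filter_product_eq (A : Finset (Fin N)) :
    ((A ×ˢ A).filter fun p => p.1 < p.2) = LT A := by
  ext ⟨a, b⟩
  simp only [LT, Finset.mem_filter, Finset.mem_product, Finset.mem_offDiag]
  constructor
  · rintro ⟨⟨h1, h2⟩, h3⟩; exact ⟨⟨h1, h2, ne_of_lt h3⟩, h3⟩
  · rintro ⟨⟨h1, h2, _⟩, h3⟩; exact ⟨⟨h1, h2⟩, h3⟩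

lemma card_LT_GT (A : Finset (Fin N)) :
    (LT A).card = (A.offDiag.filter fun p => ¬ p.1 < p.2).card := by
  refine Finset.card_nbij' (fun p => (p.2, p.1)) (fun p => (p.2, p.1)) ?_ ?_ ?_ ?_
  · rintro ⟨a, b⟩ hab
    simp only [Finset.mem_coe, LT, Finset.mem_filter, Finset.mem_offDiag] at hab ⊢
    exact ⟨⟨hab.1.2.1, hab.1.1, (hab.1.2.2).symm⟩, by omega⟩
  · rintro ⟨a, b⟩ hab
    simp only [Finset.mem_coe, LT, Finset.mem_filter, Finset.mem_offDiag] at hab ⊢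
    have : b ≠ a := hab.1.2.2.symm
    have : b < a := by omega
    exact ⟨⟨hab.1.2.1, hab.1.1, this.ne⟩, this⟩
  · rintro ⟨a, b⟩ _; rfl
  · rintro ⟨a, b⟩ _; rfl

lemma two_mul_card_LT (A : Finset (Fin N)) :
    2 * (LT A).card = A.card * A.card - A.card := by
  have h := Finset.card_filter_add_card_filter_not
    (s := A.offDiag) (p := fun p => p.1 < p.2)
  have h2 := card_LT_GT A
  have h3 := Finset.offDiag_card (s := A)
  unfold LT at *
  omega

lemma prod_offDiag_eq (lam : Fin N → ℝ) (A : Finset (Fin N)) :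
    W lam A = (∏ p ∈ LT A, (lam p.2 - lam p.1)) * ∏ p ∈ LT A, (lam p.1 - lam p.2) := by
  unfold W
  rw [← Finset.prod_filter_mul_prod_filter_not A.offDiag (fun p => p.1 < p.2)]
  congr 1
  refine Finset.prod_nbij' (fun p => (p.2, p.1)) (fun p => (p.2, p.1)) ?_ ?_ ?_ ?_ ?_
  · rintro ⟨a, b⟩ hab
    simp only [LT, Finset.mem_filter, Finset.mem_offDiag] at hab ⊢
    have : b ≠ a := hab.1.2.2.symm
    exact ⟨⟨hab.1.2.1, hab.1.1, this⟩, by omega⟩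
  · rintro ⟨a, b⟩ hab
    simp only [LT, Finset.mem_filter, Finset.mem_offDiag] at hab ⊢
    exact ⟨⟨hab.1.2.1, hab.1.1, hab.1.2.2.symm⟩, by omega⟩
  · rintro ⟨a, b⟩ _; rfl
  · rintro ⟨a, b⟩ _; rfl
  · rintro ⟨a, b⟩ _; rfl

lemma W_eq_sign (lam : Fin N → ℝ) (A : Finset (Fin N)) :
    W lam A = (-1) ^ (LT A).card * vdm lam A ^ 2 := by
  rw [prod_offDiag_eq, vdm, filter_product_eq]
  rw [← Finset.prod_pow, ← Finset.prod_mul_distrib]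
  rw [show ((-1 : ℝ) ^ (LT A).card) = ∏ _p ∈ LT A, (-1 : ℝ) by
    rw [Finset.prod_const]]
  rw [← Finset.prod_mul_distrib]
  apply Finset.prod_congr rfl
  intro p _
  ring

lemma W_mul_W (lam : Fin N → ℝ) (A B : Finset (Fin N)) (h : A.card = B.card) :
    W lam A * W lam B = vdm lam A ^ 2 * vdm lam B ^ 2 := by
  have hA := two_mul_card_LT A
  have hB := two_mul_card_LT B
  have hcard : (LT A).card = (LT B).card := by rw [h] at hA; omega
  rw [W_eq_sign, W_eq_sign, hcard]
  have h1 : ((-1 : ℝ) ^ (LT B).card) * ((-1 : ℝ) ^ (LT B).card) = 1 := by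
    rw [← pow_add, ← two_mul, pow_mul]; norm_num
  linear_combination (vdm lam A ^ 2 * vdm lam B ^ 2) * h1

lemma X_sub_X_ne_zero {i j : Fin N} (h : i ≠ j) :
    (X i - X j : MvPolynomial (Fin N) ℝ) ≠ 0 := by
  intro hc
  have h2 := congrArg (eval (fun k => if k = i then (1:ℝ) else 0)) hc
  simp only [map_sub, eval_X, map_zero, if_pos rfl, if_neg (Ne.symm h)] at h2
  norm_num at h2

lemma eval_aeval' (g : Fin N → MvPolynomial (Fin N) ℝ) (x : Fin N → ℝ)
    (p : MvPolynomial (Fin N) ℝ) :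
    eval x (aeval g p) = eval (fun k => eval x (g k)) p := by
  induction p using MvPolynomial.induction_on with
  | C a => simp
  | add p q hp hq => simp only [map_add, hp, hq]
  | mul_X p k hp => simp only [map_mul, aeval_X, eval_X, hp]

lemma dvd_sub_subst (i j : Fin N) (p : MvPolynomial (Fin N) ℝ) :
    (X i - X j) ∣
      (p - aeval (fun k => if k = i then (X j : MvPolynomial (Fin N) ℝ) else X k) p) := by
  set g : Fin N → MvPolynomial (Fin N) ℝ := fun k => if k = i then X j else X k with hg
  induction p using MvPolynomial.induction_on with
  | C a => simp
  | add p q hp hq =>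
      rw [map_add]
      have h2 : p + q - (aeval g p + aeval g q) = (p - aeval g p) + (q - aeval g q) := by ring
      rw [h2]; exact dvd_add hp hq
  | mul_X p k hp =>
      rw [map_mul, aeval_X]
      have key : p * X k - aeval g p * g k
          = (p - aeval g p) * X k + aeval g p * (X k - g k) := by ring
      rw [key]
      refine dvd_add (Dvd.dvd.mul_right hp _) (Dvd.dvd.mul_left ?_ _)
      by_cases hk : k = i
      · subst hk; simp only [hg, if_pos rfl]; exact dvd_rfl
      · simp only [hg, if_neg hk, sub_self]; exact dvd_zero _

lemma dvd_of_vanish {i j : Fin N} (hij : i ≠ j) (p : MvPolynomial (Fin N) ℝ)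
    (h : ∀ lam : Fin N → ℝ, lam i = lam j → eval lam p = 0) : (X i - X j) ∣ p := by
  have h0 : aeval (fun k => if k = i then (X j : MvPolynomial (Fin N) ℝ) else X k) p = 0 := by
    apply MvPolynomial.funext
    intro x
    rw [eval_aeval', map_zero]
    apply h
    simp [if_neg (Ne.symm hij)]
  have h1 := dvd_sub_subst i j p
  rw [h0, sub_zero] at h1
  exact h1

lemma sq_dvd {i j : Fin N} (hij : i ≠ j) (p : MvPolynomial (Fin N) ℝ)
    (hvan : ∀ lam : Fin N → ℝ, lam i = lam j → eval lam p = 0)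
    (hsym : ∀ lam : Fin N → ℝ, eval (lam ∘ (Equiv.swap i j)) p = eval lam p) :
    (X i - X j)^2 ∣ p := by
  obtain ⟨q, hq⟩ := dvd_of_vanish hij p hvan
  have hrp : rename (⇑(Equiv.swap i j)) p = p := by
    apply MvPolynomial.funext
    intro x
    rw [eval_rename]
    exact hsym x
  have hXswap : rename (⇑(Equiv.swap i j)) (X i - X j : MvPolynomial (Fin N) ℝ)
      = X j - X i := by
    rw [map_sub, rename_X, rename_X, Equiv.swap_apply_left, Equiv.swap_apply_right]
  have h2 : (X i - X j) * (q + rename (⇑(Equiv.swap i j)) q) = 0 := by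
    have h3 := congrArg (rename (⇑(Equiv.swap i j))) hq
    rw [hrp, map_mul, hXswap] at h3
    linear_combination h3 - hq
  have hne : (X i - X j : MvPolynomial (Fin N) ℝ) ≠ 0 := X_sub_X_ne_zero hij
  have hq0 : rename (⇑(Equiv.swap i j)) q = - q := by
    rcases mul_eq_zero.mp h2 with h | h
    · exact absurd h hne
    · exact eq_neg_of_add_eq_zero_right h
  have hq_van : ∀ lam : Fin N → ℝ, lam i = lam j → eval lam q = 0 := by
    intro lam hlam
    have h1 : lam ∘ (⇑(Equiv.swap i j)) = lam := by
      funext k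
      simp only [Function.comp_apply]
      rcases eq_or_ne k i with rfl | hki
      · rw [Equiv.swap_apply_left]; exact hlam.symm
      rcases eq_or_ne k j with rfl | hkj
      · rw [Equiv.swap_apply_right]; exact hlam
      · rw [Equiv.swap_apply_of_ne_of_ne hki hkj]
    have h2' : eval lam q = - eval lam q := by
      conv_lhs => rw [show q = - rename (⇑(Equiv.swap i j)) q by rw [hq0]; ring]
      rw [map_neg, eval_rename, h1]
    linarith
  obtain ⟨r, hr⟩ := dvd_of_vanish hij q hq_van
  exact ⟨r, by rw [hq, hr]; ring⟩

def EP (n : ℕ) : MvPolynomial (Fin (2*n)) ℝ :=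
  C ((2:ℝ)^n) * (∑ A ∈ powersetCard n (univ : Finset (Fin (2*n))), (WP A * WP Aᶜ)^2)
    - (∑ A ∈ powersetCard n (univ : Finset (Fin (2*n))), WP A * WP Aᶜ)^2

lemma eval_EP (n : ℕ) (lam : Fin (2*n) → ℝ) :
    eval lam (EP n) =
      (2:ℝ)^n * (∑ A ∈ powersetCard n (univ : Finset (Fin (2*n))), (W lam A * W lam Aᶜ)^2)
        - (∑ A ∈ powersetCard n (univ : Finset (Fin (2*n))), W lam A * W lam Aᶜ)^2 := by
  simp only [EP, map_sub, map_mul, map_pow, map_sum, eval_C, eval_WP]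

lemma image_compl (σ : Equiv.Perm (Fin N)) (A : Finset (Fin N)) :
    (Aᶜ).image ⇑σ = (A.image ⇑σ)ᶜ := by
  ext x
  simp only [Finset.mem_image, Finset.mem_compl]
  constructor
  · rintro ⟨y, hy, rfl⟩ ⟨z, hz, hzy⟩
    exact hy (by rwa [← σ.injective hzy])
  · intro hx
    exact ⟨σ.symm x, fun hmem => hx ⟨σ.symm x, hmem, by simp⟩, by simp⟩

lemma sum_perm (σ : Equiv.Perm (Fin N)) (n : ℕ) (φ : ℝ → ℝ) (lam : Fin N → ℝ) :
    ∑ A ∈ powersetCard n (univ : Finset (Fin N)), φ (W (lam ∘ ⇑σ) A * W (lam ∘ ⇑σ) Aᶜ)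
      = ∑ A ∈ powersetCard n (univ : Finset (Fin N)), φ (W lam A * W lam Aᶜ) := by
  refine Finset.sum_nbij' (fun A => A.image ⇑σ) (fun A => A.image ⇑σ.symm) ?_ ?_ ?_ ?_ ?_
  · intro A hA
    simp only [Finset.mem_powersetCard] at hA ⊢
    exact ⟨Finset.subset_univ _, by rw [Finset.card_image_of_injective _ σ.injective, hA.2]⟩
  · intro A hA
    simp only [Finset.mem_powersetCard] at hA ⊢
    exact ⟨Finset.subset_univ _, by rw [Finset.card_image_of_injective _ σ.symm.injective, hA.2]⟩
  · intro A _
    rw [Finset.image_image]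
    simp
  · intro A _
    rw [Finset.image_image]
    simp
  · intro A _
    rw [← W_image ⇑σ σ.injective lam A, ← W_image ⇑σ σ.injective lam Aᶜ, image_compl]

lemma eval_EP_swap (n : ℕ) (i j : Fin (2*n)) (lam : Fin (2*n) → ℝ) :
    eval (lam ∘ ⇑(Equiv.swap i j)) (EP n) = eval lam (EP n) := by
  rw [eval_EP, eval_EP, sum_perm (Equiv.swap i j) n (fun x => x^2) lam,
    sum_perm (Equiv.swap i j) n (fun x => x) lam]

lemma EP_zero : EP 0 = 0 := by
  unfold EP
  rw [Finset.powersetCard_zero]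
  simp [WP]

lemma hyperplane_vanish (m : ℕ) (ih : EP m = 0) {i j : Fin (2*(m+1))} (hij : i ≠ j)
    (lam : Fin (2*(m+1)) → ℝ) (hlam : lam i = lam j) :
    eval lam (EP (m+1)) = 0 := by
  classical
  set U : Finset (Fin (2*(m+1))) := ({i, j} : Finset _)ᶜ with hUdef
  have hiU : i ∉ U := by simp [hUdef]
  have hjU : j ∉ U := by simp [hUdef]
  have hmemU : ∀ x, x ∈ U ↔ (x ≠ i ∧ x ≠ j) := by
    intro x; simp [hUdef]
  have hUcard : U.card = 2*m := by
    rw [hUdef, Finset.card_compl, Finset.card_insert_of_notMem (by simp [hij]),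
      Finset.card_singleton]
    simp only [Fintype.card_fin]
    omega
  -- the generic split lemma
  have part : ∀ (a b : Fin (2*(m+1))), a ∈ ({i, j} : Finset _) → b ∈ ({i, j} : Finset _) →
      a ≠ b → ∀ F : Finset (Fin (2*(m+1))) → ℝ,
      ∑ A ∈ (powersetCard (m+1) (univ : Finset (Fin (2*(m+1))))).filter
          (fun A => a ∈ A ∧ b ∉ A), F A
        = ∑ B ∈ powersetCard m U, F (insert a B) := by
    intro a b hai hbi hab F
    have haU : a ∉ U := by
      intro h; rw [hmemU] at h
      rcases Finset.mem_insert.mp hai with rfl | h2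
      · exact h.1 rfl
      · exact h.2 (Finset.mem_singleton.mp h2)
    refine Finset.sum_nbij' (fun A => A.erase a) (fun B => insert a B) ?_ ?_ ?_ ?_ ?_
    · intro A hA
      simp only [Finset.mem_filter, Finset.mem_powersetCard] at hA
      obtain ⟨⟨_, hcard⟩, haA, hbA⟩ := hA
      have ha' : a = i ∨ a = j := by
        rcases Finset.mem_insert.mp hai with h | h
        · exact Or.inl h
        · exact Or.inr (Finset.mem_singleton.mp h)
      have hb' : b = i ∨ b = j := by
        rcases Finset.mem_insert.mp hbi with h | h
        · exact Or.inl h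
        · exact Or.inr (Finset.mem_singleton.mp h)
      have hiab : i = a ∨ i = b := by
        rcases ha' with rfl | rfl
        · exact Or.inl rfl
        · rcases hb' with rfl | rfl
          · exact Or.inr rfl
          · exact absurd rfl hab
      have hjab : j = a ∨ j = b := by
        rcases ha' with rfl | rfl
        · rcases hb' with rfl | rfl
          · exact absurd rfl hab
          · exact Or.inr rfl
        · exact Or.inl rfl
      simp only [Finset.mem_powersetCard]
      constructor
      · intro x hx
        rw [Finset.mem_erase] at hx
        rw [hmemU]
        have hxa : x ≠ a := hx.1
        have hxb : x ≠ b := fun h => hbA (h ▸ hx.2)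
        constructor
        · intro hxi
          rcases hiab with h | h
          · exact hxa (hxi.trans h)
          · exact hxb (hxi.trans h)
        · intro hxj
          rcases hjab with h | h
          · exact hxa (hxj.trans h)
          · exact hxb (hxj.trans h)
      · rw [Finset.card_erase_of_mem haA, hcard]
        omega
    · intro B hB
      simp only [Finset.mem_powersetCard] at hB
      have haB : a ∉ B := fun h => haU (hB.1 h)
      simp only [Finset.mem_filter, Finset.mem_powersetCard]
      refine ⟨⟨Finset.subset_univ _, ?_⟩, Finset.mem_insert_self _ _, ?_⟩
      · rw [Finset.card_insert_of_notMem haB, hB.2]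
      · intro hbmem
        rcases Finset.mem_insert.mp hbmem with rfl | h2
        · exact hab rfl
        · have := hB.1 h2
          rw [hmemU] at this
          rcases Finset.mem_insert.mp hbi with rfl | h3
          · exact this.1 rfl
          · rw [Finset.mem_singleton] at h3; subst h3; exact this.2 rfl
    · intro A hA
      simp only [Finset.mem_filter] at hA
      exact Finset.insert_erase hA.2.1
    · intro B hB
      simp only [Finset.mem_powersetCard] at hB
      exact Finset.erase_insert (fun h => haU (hB.1 h))
    · intro A hA
      simp only [Finset.mem_filter] at hA
      rw [Finset.insert_erase hA.2.1]
  have hpair_i : i ∈ ({i, j} : Finset _) := Finset.mem_insert_self _ _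
  have hpair_j : j ∈ ({i, j} : Finset _) := by simp
  -- full split
  have split : ∀ F : Finset (Fin (2*(m+1))) → ℝ,
      (∀ A, i ∈ A → j ∈ A → F A = 0) →
      (∀ A, i ∉ A → j ∉ A → F A = 0) →
      ∑ A ∈ powersetCard (m+1) (univ : Finset (Fin (2*(m+1)))), F A
        = (∑ B ∈ powersetCard m U, F (insert i B))
          + ∑ B ∈ powersetCard m U, F (insert j B) := by
    intro F h1 h2
    rw [← Finset.sum_filter_add_sum_filter_not
      (powersetCard (m+1) (univ : Finset (Fin (2*(m+1))))) (fun A => i ∈ A) F]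
    congr 1
    · rw [← part i j hpair_i hpair_j hij F]
      refine (Finset.sum_subset ?_ ?_).symm
      · intro A hA
        simp only [Finset.mem_filter] at hA ⊢
        exact ⟨hA.1, hA.2.1⟩
      · intro A hA hA2
        simp only [Finset.mem_filter] at hA hA2
        have : j ∈ A := by
          by_contra hc
          exact hA2 ⟨hA.1, hA.2, hc⟩
        exact h1 A hA.2 this
    · rw [← part j i hpair_j hpair_i hij.symm F]
      refine (Finset.sum_subset ?_ ?_).symm
      · intro A hA
        simp only [Finset.mem_filter] at hA ⊢
        exact ⟨hA.1, hA.2.2⟩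
      · intro A hA hA2
        simp only [Finset.mem_filter] at hA hA2
        have : j ∉ A := by
          by_contra hc
          exact hA2 ⟨hA.1, hc, hA.2⟩
        exact h2 A hA.2 this
  -- value computations
  set c : ℝ := ∏ k ∈ U, ((lam k - lam i) * (lam i - lam k)) with hc
  set g : Finset (Fin (2*(m+1))) → ℝ := fun B => W lam B * W lam (U \ B) with hgdef
  have compl_ins : ∀ (a b : Fin (2*(m+1))), a ≠ b → (∀ x, x ∈ U ↔ (x ≠ a ∧ x ≠ b)) →
      ∀ B, B ⊆ U → (insert a B)ᶜ = insert b (U \ B) := by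
    intro a b hab hU B hBU
    ext x
    simp only [Finset.mem_compl, Finset.mem_insert, Finset.mem_sdiff]
    constructor
    · intro hx
      push_neg at hx
      rcases eq_or_ne x b with rfl | hxb
      · exact Or.inl rfl
      · exact Or.inr ⟨(hU x).mpr ⟨hx.1, hxb⟩, hx.2⟩
    · intro hx
      push_neg
      rcases hx with rfl | ⟨hxU, hxB⟩
      · exact ⟨hab.symm, fun h => ((hU x).mp (hBU h)).2 rfl⟩
      · exact ⟨((hU x).mp hxU).1, hxB⟩
  have hval : ∀ (a b : Fin (2*(m+1))), a ≠ b → lam a = lam i → lam b = lam i →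
      (∀ x, x ∈ U ↔ (x ≠ a ∧ x ≠ b)) → ∀ B ∈ powersetCard m U,
      W lam (insert a B) * W lam ((insert a B)ᶜ) = c * g B := by
    intro a b hab hla hlb hU B hB
    rw [Finset.mem_powersetCard] at hB
    have haB : a ∉ B := fun h => ((hU a).mp (hB.1 h)).1 rfl
    have hbUB : b ∉ U \ B := fun h => ((hU b).mp (Finset.mem_sdiff.mp h).1).2 rfl
    rw [compl_ins a b hab hU B hB.1]
    rw [W_insert lam haB, W_insert lam hbUB]
    rw [hla, hlb]
    have hprod : (∏ k ∈ B, ((lam k - lam i) * (lam i - lam k)))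
        * (∏ k ∈ U \ B, ((lam k - lam i) * (lam i - lam k))) = c := by
      rw [hc, mul_comm]
      exact Finset.prod_sdiff hB.1
    simp only [hgdef]
    linear_combination (W lam B * W lam (U \ B)) * hprod
  have hUij : ∀ x, x ∈ U ↔ (x ≠ j ∧ x ≠ i) := by
    intro x; rw [hmemU x]; exact and_comm
  have hvali := hval i j hij rfl hlam.symm hmemU
  have hvalj := hval j i hij.symm hlam.symm rfl hUij
  -- transport to Fin (2m)
  set e := U.orderEmbOfFin hUcard with he
  have himg : (univ : Finset (Fin (2*m))).image ⇑e = U := by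
    ext x
    simp only [Finset.mem_image, Finset.mem_univ, true_and]
    constructor
    · rintro ⟨y, rfl⟩; exact Finset.orderEmbOfFin_mem U hUcard y
    · intro hx
      have hr : x ∈ Set.range ⇑e := by
        rw [he, Finset.range_orderEmbOfFin]; exact hx
      obtain ⟨y, hy⟩ := hr
      exact ⟨y, hy⟩
  set lam' : Fin (2*m) → ℝ := lam ∘ ⇑e with hlam'
  have himg_compl : ∀ B' : Finset (Fin (2*m)), (B'ᶜ).image ⇑e = U \ B'.image ⇑e := by
    intro B'
    ext x
    simp only [Finset.mem_image, Finset.mem_compl, Finset.mem_sdiff]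
    constructor
    · rintro ⟨y, hy, rfl⟩
      refine ⟨?_, ?_⟩
      · rw [← himg]
        exact Finset.mem_image_of_mem _ (Finset.mem_univ y)
      · rintro ⟨z, hz, hzy⟩
        exact hy (by rwa [← e.injective hzy])
    · rintro ⟨hxU, hx2⟩
      have hr : x ∈ Set.range ⇑e := by rw [he, Finset.range_orderEmbOfFin]; exact hxU
      obtain ⟨y, rfl⟩ := hr
      exact ⟨y, fun hy => hx2 ⟨y, hy, rfl⟩, rfl⟩
  have trans : ∀ φ : ℝ → ℝ,
      ∑ B ∈ powersetCard m U, φ (g B)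
        = ∑ B' ∈ powersetCard m (univ : Finset (Fin (2*m))), φ (W lam' B' * W lam' B'ᶜ) := by
    intro φ
    refine (Finset.sum_nbij' (fun B' => B'.image ⇑e)
      (fun B => B.preimage ⇑e e.injective.injOn) ?_ ?_ ?_ ?_ ?_).symm
    · intro B' hB'
      simp only [Finset.mem_powersetCard] at hB' ⊢
      constructor
      · rw [← himg]
        exact Finset.image_subset_image (Finset.subset_univ _)
      · rw [Finset.card_image_of_injective _ e.injective, hB'.2]
    · intro B hB
      simp only [Finset.mem_powersetCard] at hB ⊢
      have himgpre : (B.preimage ⇑e e.injective.injOn).image ⇑e = B := by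
        rw [Finset.image_preimage]
        apply Finset.filter_true_of_mem
        intro x hx
        rw [he, Finset.range_orderEmbOfFin]
        exact hB.1 hx
      constructor
      · exact Finset.subset_univ _
      · have h5 := congrArg Finset.card himgpre
        rw [Finset.card_image_of_injective _ e.injective] at h5
        rw [h5, hB.2]
    · intro B' _
      ext y
      simp only [Finset.mem_preimage, Finset.mem_image]
      constructor
      · rintro ⟨z, hz, hzy⟩
        rwa [← e.injective hzy]
      · intro hy
        exact ⟨y, hy, rfl⟩
    · intro B hB
      simp only [Finset.mem_powersetCard] at hB
      rw [Finset.image_preimage]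
      apply Finset.filter_true_of_mem
      intro x hx
      rw [he, Finset.range_orderEmbOfFin]
      exact hB.1 hx
    · intro B' _
      simp only [hgdef]
      rw [← W_image ⇑e e.injective lam B', ← himg_compl, ← W_image ⇑e e.injective lam B'ᶜ]
  -- zero hypotheses for split
  have z1 : ∀ A : Finset (Fin (2*(m+1))), i ∈ A → j ∈ A → W lam A * W lam Aᶜ = 0 := by
    intro A hi2 hj2
    rw [W_eq_zero lam hij hi2 hj2 hlam, zero_mul]
  have z2 : ∀ A : Finset (Fin (2*(m+1))), i ∉ A → j ∉ A → W lam A * W lam Aᶜ = 0 := by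
    intro A hi2 hj2
    rw [W_eq_zero lam hij (Finset.mem_compl.mpr hi2) (Finset.mem_compl.mpr hj2) hlam, mul_zero]
  have z1' : ∀ A : Finset (Fin (2*(m+1))), i ∈ A → j ∈ A → (W lam A * W lam Aᶜ)^2 = 0 := by
    intro A h1 h2; rw [z1 A h1 h2]; ring
  have z2' : ∀ A : Finset (Fin (2*(m+1))), i ∉ A → j ∉ A → (W lam A * W lam Aᶜ)^2 = 0 := by
    intro A h1 h2; rw [z2 A h1 h2]; ring
  rw [eval_EP]
  rw [split (fun A => (W lam A * W lam Aᶜ)^2) z1' z2']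
  rw [split (fun A => W lam A * W lam Aᶜ) z1 z2]
  have E1 : ∑ B ∈ powersetCard m U, (W lam (insert i B) * W lam ((insert i B)ᶜ))^2
      = c^2 * ∑ B ∈ powersetCard m U, (g B)^2 := by
    rw [Finset.mul_sum]
    refine Finset.sum_congr rfl fun B hB => ?_
    rw [hvali B hB]; ring
  have E2 : ∑ B ∈ powersetCard m U, (W lam (insert j B) * W lam ((insert j B)ᶜ))^2
      = c^2 * ∑ B ∈ powersetCard m U, (g B)^2 := by
    rw [Finset.mul_sum]
    refine Finset.sum_congr rfl fun B hB => ?_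
    rw [hvalj B hB]; ring
  have E3 : ∑ B ∈ powersetCard m U, W lam (insert i B) * W lam ((insert i B)ᶜ)
      = c * ∑ B ∈ powersetCard m U, g B := by
    rw [Finset.mul_sum]
    exact Finset.sum_congr rfl fun B hB => hvali B hB
  have E4 : ∑ B ∈ powersetCard m U, W lam (insert j B) * W lam ((insert j B)ᶜ)
      = c * ∑ B ∈ powersetCard m U, g B := by
    rw [Finset.mul_sum]
    exact Finset.sum_congr rfl fun B hB => hvalj B hB
  rw [E1, E2, E3, E4, trans (fun x => x^2), trans (fun x => x)]
  have hIH : (2:ℝ)^m * (∑ B' ∈ powersetCard m (univ : Finset (Fin (2*m))),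
        (W lam' B' * W lam' B'ᶜ)^2)
      - (∑ B' ∈ powersetCard m (univ : Finset (Fin (2*m))), W lam' B' * W lam' B'ᶜ)^2 = 0 := by
    have h6 := congrArg (eval lam') ih
    rw [eval_EP, map_zero] at h6
    exact h6
  rw [pow_succ]
  linear_combination (4 * c^2) * hIH

lemma exists_good_b (lam : Fin N → ℝ) (hinj : Function.Injective lam) :
    ∃ b : Fin N → ℝ, (∀ i j : Fin N, i < j → b i ≠ b j) ∧
      (∀ i j k l : Fin N, i < j → k < l → (i, j) ≠ (k, l) →
        (lam j - lam i) * (b k - b l) ≠ (lam l - lam k) * (b i - b j)) := by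
  classical
  set pairs : Finset (Fin N × Fin N) := LT (univ : Finset (Fin N)) with hpairs
  have hmem_pairs : ∀ i j : Fin N, i < j → (i, j) ∈ pairs := by
    intro i j hij
    simp only [hpairs, LT, Finset.mem_filter, Finset.mem_offDiag]
    exact ⟨⟨Finset.mem_univ _, Finset.mem_univ _, ne_of_lt hij⟩, hij⟩
  set G : MvPolynomial (Fin N) ℝ :=
    (∏ q ∈ pairs, (X q.1 - X q.2)) *
      ∏ q ∈ (pairs ×ˢ pairs).filter (fun q => q.1 ≠ q.2),
        (C (lam q.1.2 - lam q.1.1) * (X q.2.1 - X q.2.2)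
          - C (lam q.2.2 - lam q.2.1) * (X q.1.1 - X q.1.2)) with hG
  have hfac : ∀ q ∈ (pairs ×ˢ pairs).filter (fun q : _ × _ => q.1 ≠ q.2),
      (C (lam q.1.2 - lam q.1.1) * (X q.2.1 - X q.2.2)
        - C (lam q.2.2 - lam q.2.1) * (X q.1.1 - X q.1.2) : MvPolynomial (Fin N) ℝ) ≠ 0 := by
    rintro ⟨⟨i, j⟩, ⟨k, l⟩⟩ hq h0
    simp only [Finset.mem_filter, Finset.mem_product, hpairs, LT, Finset.mem_offDiag,
      ne_eq] at hq
    obtain ⟨⟨hij', hkl'⟩, hne⟩ := hq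
    have hij : i < j := hij'.2
    have hkl : k < l := hkl'.2
    have h2 := congrArg (eval (fun t => if t = k then (1:ℝ) else 0)) h0
    simp only [map_sub, map_mul, eval_C, eval_X, map_zero] at h2
    simp only [if_true] at h2
    rw [if_neg (ne_of_gt hkl)] at h2
    by_cases hik : i = k
    · subst hik
      rw [if_pos rfl, if_neg (ne_of_gt hij)] at h2
      have hjl : lam j = lam l := by linarith
      exact hne (by rw [hinj hjl])
    · rw [if_neg hik] at h2
      by_cases hjk : j = k
      · subst hjk
        rw [if_pos rfl] at h2
        have hli : lam l = lam i := by linarith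
        have hcontra := lt_trans hij hkl
        rw [hinj hli] at hcontra
        exact absurd hcontra (lt_irrefl i)
      · rw [if_neg hjk] at h2
        have hji : lam j = lam i := by linarith
        exact absurd (hinj hji) (ne_of_gt hij)
  have hG0 : G ≠ 0 := by
    rw [hG]
    apply mul_ne_zero
    · rw [Finset.prod_ne_zero_iff]
      rintro ⟨i, j⟩ hq
      simp only [hpairs, LT, Finset.mem_filter, Finset.mem_offDiag] at hq
      exact X_sub_X_ne_zero hq.1.2.2
    · rw [Finset.prod_ne_zero_iff]
      exact hfac
  have hex : ∃ b : Fin N → ℝ, eval b G ≠ 0 := by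
    by_contra hc
    push_neg at hc
    exact hG0 (MvPolynomial.funext fun x => by rw [hc x, map_zero])
  obtain ⟨b, hb⟩ := hex
  rw [hG, map_mul] at hb
  obtain ⟨hb1, hb2⟩ := mul_ne_zero_iff.mp hb
  rw [map_prod, Finset.prod_ne_zero_iff] at hb1
  rw [map_prod, Finset.prod_ne_zero_iff] at hb2
  refine ⟨b, ?_, ?_⟩
  · intro i j hij
    have h3 := hb1 (i, j) (hmem_pairs i j hij)
    simp only [map_sub, eval_X] at h3
    exact sub_ne_zero.mp h3
  · intro i j k l hij hkl hne
    have hq : ((i, j), (k, l)) ∈ (pairs ×ˢ pairs).filter (fun q : _ × _ => q.1 ≠ q.2) := by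
      simp only [Finset.mem_filter, Finset.mem_product, ne_eq]
      exact ⟨⟨hmem_pairs i j hij, hmem_pairs k l hkl⟩, hne⟩
    have h3 := hb2 _ hq
    simp only [map_sub, map_mul, eval_C, eval_X] at h3
    intro hcontra
    exact h3 (by rw [hcontra]; ring)

lemma eval_zero_of_inj (n : ℕ) (hn : 0 < n)
    (hdvd : ∀ i j : Fin (2*n), i ≠ j → (X i - X j)^2 ∣ EP n)
    (lam : Fin (2*n) → ℝ) (hinj : Function.Injective lam) :
    eval lam (EP n) = 0 := by
  classical
  obtain ⟨b, hb1, hb2⟩ := exists_good_b lam hinj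
  set Φ : MvPolynomial (Fin (2*n)) ℝ →+* Polynomial ℝ :=
    eval₂Hom (Polynomial.C : ℝ →+* Polynomial ℝ)
      (fun k => Polynomial.C (lam k) + Polynomial.C (b k) * Polynomial.X) with hPhi
  set p : Polynomial ℝ := Φ (EP n) with hp
  set t : Fin (2*n) × Fin (2*n) → ℝ := fun q => (lam q.2 - lam q.1) / (b q.1 - b q.2) with ht
  set pairs : Finset (Fin (2*n) × Fin (2*n)) := LT (univ : Finset (Fin (2*n))) with hpairs
  have hdvd2 : ∀ q ∈ pairs, (Polynomial.X - Polynomial.C (t q))^2 ∣ p := by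
    rintro ⟨i, j⟩ hq
    simp only [hpairs, LT, Finset.mem_filter, Finset.mem_offDiag] at hq
    have hij : i < j := hq.2
    have hbne : b i - b j ≠ 0 := sub_ne_zero.mpr (hb1 i j hij)
    have hPhiX : Φ (X i - X j)
        = Polynomial.C (b i - b j) * (Polynomial.X - Polynomial.C (t (i, j))) := by
      have h9 : Polynomial.C (b i - b j) * Polynomial.C (t (i, j))
          = Polynomial.C (lam j - lam i) := by
        rw [← Polynomial.C_mul, ht]
        simp only []
        rw [mul_div_cancel₀ _ hbne]
      simp only [map_sub, hPhi, eval₂Hom_X']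
      rw [Polynomial.C_sub, Polynomial.C_sub] at h9
      linear_combination h9
    have h4 : Φ ((X i - X j)^2) ∣ p := map_dvd Φ (hdvd i j (ne_of_lt hij))
    rw [map_pow, hPhiX, mul_pow] at h4
    exact (dvd_mul_left _ _).trans h4
  have htinj : ∀ q ∈ pairs, ∀ q' ∈ pairs, q ≠ q' → t q ≠ t q' := by
    rintro ⟨i, j⟩ hq ⟨k, l⟩ hq' hne
    simp only [hpairs, LT, Finset.mem_filter, Finset.mem_offDiag] at hq hq'
    have hij : i < j := hq.2
    have hkl : k < l := hq'.2
    have h1 : b i - b j ≠ 0 := sub_ne_zero.mpr (hb1 i j hij)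
    have h2 : b k - b l ≠ 0 := sub_ne_zero.mpr (hb1 k l hkl)
    intro hteq
    rw [ht] at hteq
    simp only [] at hteq
    rw [div_eq_div_iff h1 h2] at hteq
    exact hb2 i j k l hij hkl hne (by linarith)
  have hproddvd : (∏ q ∈ pairs, (Polynomial.X - Polynomial.C (t q))^2) ∣ p := by
    apply Finset.prod_dvd_of_coprime
    · intro q hq q' hq' hne
      have hne2 : t q ≠ t q' :=
        htinj q (Finset.mem_coe.mp hq) q' (Finset.mem_coe.mp hq') hne
      exact (Polynomial.isCoprime_X_sub_C_of_isUnit_sub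
        ((sub_ne_zero.mpr hne2).isUnit)).pow
    · exact hdvd2
  have hcard : 2 * pairs.card = 2*n * (2*n) - 2*n := by
    have h3 := two_mul_card_LT (univ : Finset (Fin (2*n)))
    rwa [Finset.card_univ, Fintype.card_fin] at h3
  have hdegprod : (∏ q ∈ pairs, (Polynomial.X - Polynomial.C (t q))^2).natDegree
      = 2 * pairs.card := by
    rw [Polynomial.natDegree_prod _ _
      (fun q _ => pow_ne_zero _ (Polynomial.X_sub_C_ne_zero _))]
    have h3 : ∀ q ∈ pairs, ((Polynomial.X - Polynomial.C (t q))^2).natDegree = 2 := by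
      intro q _
      rw [Polynomial.natDegree_pow, Polynomial.natDegree_X_sub_C, mul_one]
    rw [Finset.sum_congr rfl h3, Finset.sum_const, smul_eq_mul, mul_comm]
  have hfactordeg : ∀ (u v : Fin (2*n)), (Φ (X u - X v)).natDegree ≤ 1 := by
    intro u v
    simp only [map_sub, hPhi, eval₂Hom_X']
    refine (Polynomial.natDegree_sub_le _ _).trans ?_
    rw [max_le_iff]
    constructor <;>
    · refine (Polynomial.natDegree_add_le _ _).trans ?_
      rw [max_le_iff, Polynomial.natDegree_C]
      exact ⟨Nat.zero_le 1, (Polynomial.natDegree_C_mul_le _ _).trans Polynomial.natDegree_X_le⟩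
  have hWPdeg : ∀ A : Finset (Fin (2*n)), A.card = n → (Φ (WP A)).natDegree ≤ n*n - n := by
    intro A hA
    rw [WP, map_prod]
    refine (Polynomial.natDegree_prod_le _ _).trans ?_
    calc ∑ q ∈ A.offDiag, (Φ (X q.2 - X q.1)).natDegree
        ≤ ∑ _q ∈ A.offDiag, 1 := Finset.sum_le_sum (fun q _ => hfactordeg _ _)
      _ = A.offDiag.card := by rw [Finset.sum_const, smul_eq_mul, mul_one]
      _ = n*n - n := by rw [Finset.offDiag_card, hA]
  have hAcard : ∀ A ∈ powersetCard n (univ : Finset (Fin (2*n))),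
      A.card = n ∧ Aᶜ.card = n := by
    intro A hA
    rw [Finset.mem_powersetCard] at hA
    refine ⟨hA.2, ?_⟩
    rw [Finset.card_compl, hA.2, Fintype.card_fin]
    omega
  have hterm : ∀ A ∈ powersetCard n (univ : Finset (Fin (2*n))),
      (Φ (WP A) * Φ (WP Aᶜ)).natDegree ≤ 2*(n*n - n) := by
    intro A hA
    obtain ⟨h1, h2⟩ := hAcard A hA
    refine (Polynomial.natDegree_mul_le).trans ?_
    have h3 := hWPdeg A h1
    have h4 := hWPdeg Aᶜ h2
    omega
  have hC : (Φ (C ((2:ℝ)^n))).natDegree = 0 := by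
    simp only [hPhi, eval₂Hom_C]
    exact Polynomial.natDegree_C _
  have hpdeg : p.natDegree ≤ 4*(n*n - n) := by
    have hEPimg : p = Φ (C ((2:ℝ)^n))
        * (∑ A ∈ powersetCard n (univ : Finset (Fin (2*n))), (Φ (WP A) * Φ (WP Aᶜ))^2)
        - (∑ A ∈ powersetCard n (univ : Finset (Fin (2*n))), Φ (WP A) * Φ (WP Aᶜ))^2 := by
      rw [hp, EP]
      simp only [map_sub, map_mul, map_sum, map_pow]
    rw [hEPimg]
    refine (Polynomial.natDegree_sub_le _ _).trans ?_
    rw [max_le_iff]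
    constructor
    · refine (Polynomial.natDegree_mul_le).trans ?_
      rw [hC, zero_add]
      refine Polynomial.natDegree_sum_le_of_forall_le _ _ ?_
      intro A hA
      refine (Polynomial.natDegree_pow_le).trans ?_
      have h5 := hterm A hA
      omega
    · refine (Polynomial.natDegree_pow_le).trans ?_
      have h5 : (∑ A ∈ powersetCard n (univ : Finset (Fin (2*n))),
          Φ (WP A) * Φ (WP Aᶜ)).natDegree ≤ 2*(n*n-n) :=
        Polynomial.natDegree_sum_le_of_forall_le _ _ (fun A hA => hterm A hA)
      omega
  have hp0 : p = 0 := by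
    by_contra hc
    have h6 := Polynomial.natDegree_le_of_dvd hproddvd hc
    rw [hdegprod] at h6
    have e1 : 2*n * (2*n) = 4*(n*n) := by ring
    rw [e1] at hcard
    have e2 : n ≤ n*n := Nat.le_mul_of_pos_left n hn
    generalize hk : n*n = k at hcard hpdeg e2
    omega
  have hcomp : (Polynomial.evalRingHom (0:ℝ)).comp Φ
      = (eval lam : MvPolynomial (Fin (2*n)) ℝ →+* ℝ) := by
    apply MvPolynomial.ringHom_ext
    · intro r
      simp [hPhi]
    · intro k
      simp [hPhi]
  have h8 := RingHom.congr_fun hcomp (EP n)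
  rw [RingHom.comp_apply, ← hp, hp0, map_zero] at h8
  exact h8.symm

theorem EP_eq_zero : ∀ n : ℕ, EP n = 0 := by
  intro n
  induction n with
  | zero => exact EP_zero
  | succ m ih =>
      have hdvd : ∀ i j : Fin (2*(m+1)), i ≠ j → (X i - X j)^2 ∣ EP (m+1) := by
        intro i j hij
        refine sq_dvd hij _ ?_ ?_
        · intro lam hlam
          exact hyperplane_vanish m ih hij lam hlam
        · intro lam
          exact eval_EP_swap (m+1) i j lam
      have hinjzero : ∀ lam : Fin (2*(m+1)) → ℝ, Function.Injective lam →
          eval lam (EP (m+1)) = 0 :=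
        fun lam hinj => eval_zero_of_inj (m+1) (Nat.succ_pos m) hdvd lam hinj
      set D : MvPolynomial (Fin (2*(m+1))) ℝ :=
        ∏ q ∈ LT (univ : Finset (Fin (2*(m+1)))), (X q.1 - X q.2) with hDdef
      have hD : ∀ lam : Fin (2*(m+1)) → ℝ,
          eval lam (D * EP (m+1))
            = 0 := by
        intro lam
        rw [map_mul]
        by_cases hinj : Function.Injective lam
        · rw [hinjzero lam hinj, mul_zero]
        · rw [Function.not_injective_iff] at hinj
          obtain ⟨a, b, hab, hne⟩ := hinj
          have hzero : eval lam D = 0 := by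
            rw [hDdef]
            rw [map_prod]
            rcases lt_or_gt_of_ne hne with h | h
            · apply Finset.prod_eq_zero (i := (a, b))
              · simp only [LT, Finset.mem_filter, Finset.mem_offDiag]
                exact ⟨⟨Finset.mem_univ _, Finset.mem_univ _, hne⟩, h⟩
              · simp only [map_sub, eval_X]
                rw [hab, sub_self]
            · apply Finset.prod_eq_zero (i := (b, a))
              · simp only [LT, Finset.mem_filter, Finset.mem_offDiag]
                exact ⟨⟨Finset.mem_univ _, Finset.mem_univ _, hne.symm⟩, h⟩
              · simp only [map_sub, eval_X]
                rw [hab, sub_self]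
          rw [hzero, zero_mul]
      have hprodEP : D * EP (m+1) = 0 :=
        MvPolynomial.funext (fun x => by rw [hD x, map_zero])
      have hprodne : D ≠ 0 := by
        rw [hDdef, Finset.prod_ne_zero_iff]
        rintro ⟨a, b⟩ hq
        simp only [LT, Finset.mem_filter, Finset.mem_offDiag] at hq
        exact X_sub_X_ne_zero hq.1.2.2
      rcases mul_eq_zero.mp hprodEP with h | h
      · exact absurd h hprodne
      · exact h

theorem key_eval (n : ℕ) (lam : Fin (2*n) → ℝ) :
    (2:ℝ)^n * (∑ A ∈ powersetCard n (univ : Finset (Fin (2*n))), (W lam A * W lam Aᶜ)^2)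
      = (∑ A ∈ powersetCard n (univ : Finset (Fin (2*n))), W lam A * W lam Aᶜ)^2 := by
  have h := congrArg (eval lam) (EP_eq_zero n)
  rw [eval_EP, map_zero] at h
  linarith

end
end Stmt9

theorem statement9 (n : ℕ) (hn : 2 ≤ n) (lam : Fin (2 * n) → ℝ) :
    ∑ A ∈ Finset.powersetCard n (Finset.univ : Finset (Fin (2 * n))),
        vdm lam A ^ 4 * vdm lam Aᶜ ^ 4 =
      ((2 : ℝ) ^ n)⁻¹ *
        (∑ A ∈ Finset.powersetCard n (Finset.univ : Finset (Fin (2 * n))),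
            vdm lam A ^ 2 * vdm lam Aᶜ ^ 2) ^ 2 := by
  have hcard : ∀ A ∈ Finset.powersetCard n (Finset.univ : Finset (Fin (2 * n))),
      A.card = Aᶜ.card := by
    intro A hA
    rw [Finset.mem_powersetCard] at hA
    rw [hA.2, Finset.card_compl, hA.2, Fintype.card_fin]
    omega
  have h1 : ∀ A ∈ Finset.powersetCard n (Finset.univ : Finset (Fin (2 * n))),
      vdm lam A ^ 2 * vdm lam Aᶜ ^ 2 = Stmt9.W lam A * Stmt9.W lam Aᶜ :=
    fun A hA => (Stmt9.W_mul_W lam A Aᶜ (hcard A hA)).symm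
  have h2 : ∀ A ∈ Finset.powersetCard n (Finset.univ : Finset (Fin (2 * n))),
      vdm lam A ^ 4 * vdm lam Aᶜ ^ 4 = (Stmt9.W lam A * Stmt9.W lam Aᶜ) ^ 2 := by
    intro A hA
    calc vdm lam A ^ 4 * vdm lam Aᶜ ^ 4
        = (vdm lam A ^ 2 * vdm lam Aᶜ ^ 2) ^ 2 := by ring
      _ = (Stmt9.W lam A * Stmt9.W lam Aᶜ) ^ 2 := by rw [h1 A hA]
  rw [Finset.sum_congr rfl h2, Finset.sum_congr rfl h1]
  rw [← Stmt9.key_eval n lam, ← mul_assoc,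
    inv_mul_cancel₀ (by positivity : ((2:ℝ)^n) ≠ 0), one_mul]
end

section
/- Let n ≥ 1 and let λ_1,…,λ_{2n} be distinct real numbers. Let K be the (2n)×(2n) matrix with K_{ij} = 1/(λ_i − λ_j) for i ≠ j and K_{ii} = 0, and let H be the (2n)×(2n) matrix with H_{ij} = 1/(λ_i − λ_j)² for i ≠ j and H_{ii} = 0. Then det(K) = Hf(H). -/
open scoped BigOperators

/-- The permutations `π_α` of `{1,…,2n}` corresponding to perfect matchings
`α ∈ Π_{2n}` (written 0-based). -/
def matchPerms (n : ℕ) : Finset (Equiv.Perm (Fin (2 * n))) :=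
  Finset.univ.filter fun π =>
    (∀ i : Fin n, π ⟨2 * i.val, by have := i.isLt; omega⟩ <
        π ⟨2 * i.val + 1, by have := i.isLt; omega⟩) ∧
      ∀ i j : Fin n, i < j → π ⟨2 * i.val, by have := i.isLt; omega⟩ <
        π ⟨2 * j.val, by have := j.isLt; omega⟩

/-- The Hafnian of a `(2n)×(2n)` matrix:
`Hf(H) = Σ_{α ∈ Π_{2n}} ∏_{i=1}^n H_{α_{i,1},α_{i,2}}`. -/
def hf {n : ℕ} (H : Matrix (Fin (2 * n)) (Fin (2 * n)) ℝ) : ℝ :=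
  ∑ π ∈ matchPerms n,
    ∏ i : Fin n, H (π ⟨2 * i.val, by have := i.isLt; omega⟩)
      (π ⟨2 * i.val + 1, by have := i.isLt; omega⟩)

namespace Statement12Aux

lemma mem_matchPerms {m : ℕ} {π : Equiv.Perm (Fin (2*m))} :
    π ∈ matchPerms m ↔
      ((∀ i : Fin m, π ⟨2 * i.val, by have := i.isLt; omega⟩ <
        π ⟨2 * i.val + 1, by have := i.isLt; omega⟩) ∧
      ∀ i j : Fin m, i < j → π ⟨2 * i.val, by have := i.isLt; omega⟩ <
        π ⟨2 * j.val, by have := j.isLt; omega⟩) := by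
  simp [matchPerms]

lemma matchPerms_apply_zero {m : ℕ} {π : Equiv.Perm (Fin (2*(m+1)))}
    (hπ : π ∈ matchPerms (m+1)) : π ⟨0, by omega⟩ = ⟨0, by omega⟩ := by
  rw [mem_matchPerms] at hπ
  obtain ⟨h1, h2⟩ := hπ
  have key : ∀ k : Fin (2*(m+1)), π ⟨0, by omega⟩ ≤ π k := by
    intro k
    have hk := k.isLt
    have heven : ∀ i : Fin (m+1), π ⟨0, by omega⟩ ≤ π ⟨2 * i.val, by have := i.isLt; omega⟩ := by
      intro i
      by_cases hi : i.val = 0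
      · have : (⟨2 * i.val, by have := i.isLt; omega⟩ : Fin (2*(m+1))) = ⟨0, by omega⟩ := by
          apply Fin.ext; simp [hi]
        rw [this]
      · have h0i : (⟨0, by omega⟩ : Fin (m+1)) < i := by
          rw [Fin.lt_def]; simpa using Nat.pos_of_ne_zero hi
        have := h2 ⟨0, by omega⟩ i h0i
        simpa using this.le
    set i : Fin (m+1) := ⟨k.val / 2, by omega⟩ with hi
    have hcase : k.val = 2 * i.val ∨ k.val = 2 * i.val + 1 := by simp [hi]; omega
    rcases hcase with hc | hc
    · have : k = ⟨2 * i.val, by have := i.isLt; omega⟩ := Fin.ext hc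
      rw [this]; exact heven i
    · have : k = ⟨2 * i.val + 1, by have := i.isLt; omega⟩ := Fin.ext hc
      rw [this]
      exact le_trans (heven i) (h1 i).le
  have h0 : π (π.symm ⟨0, by omega⟩) = ⟨0, by omega⟩ := π.apply_symm_apply _
  have := key (π.symm ⟨0, by omega⟩)
  rw [h0] at this
  exact le_antisymm this (Fin.mk_le_mk.mpr (Nat.zero_le _))



/-- increasing embedding `Fin (2n) → Fin (2n+2)` missing `0` and `b` (for `b ≠ 0`) -/
def emb (n : ℕ) (b : Fin (2*(n+1))) (r : Fin (2*n)) : Fin (2*(n+1)) :=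
  if r.val + 1 < b.val then ⟨r.val+1, by omega⟩ else ⟨r.val+2, by have := r.isLt; omega⟩

variable {n : ℕ}

lemma emb_val (b : Fin (2*(n+1))) (r : Fin (2*n)) :
    (emb n b r).val = if r.val + 1 < b.val then r.val+1 else r.val+2 := by
  unfold emb; split <;> rfl

lemma emb_lt_iff (b : Fin (2*(n+1))) {r s : Fin (2*n)} : emb n b r < emb n b s ↔ r < s := by
  simp only [Fin.lt_def, emb_val]; split <;> split <;> omega

lemma emb_injective (b : Fin (2*(n+1))) : Function.Injective (emb n b) := by
  intro r s h
  have h' : (emb n b r).val = (emb n b s).val := by rw [h]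
  simp only [emb_val] at h'
  apply Fin.ext; split at h' <;> split at h' <;> omega

lemma emb_ne_zero (b : Fin (2*(n+1))) (r : Fin (2*n)) : emb n b r ≠ 0 := by
  intro h
  have h' : (emb n b r).val = 0 := by rw [h]; rfl
  simp only [emb_val] at h'; split at h' <;> omega

lemma emb_ne (b : Fin (2*(n+1))) (r : Fin (2*n)) (hb : b ≠ 0) : emb n b r ≠ b := by
  intro h
  have hb' : b.val ≠ 0 := fun h0 => hb (Fin.ext h0)
  have h' : (emb n b r).val = b.val := by rw [h]
  simp only [emb_val] at h'; split at h' <;> omega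

lemma emb_surj (b : Fin (2*(n+1))) (hb : b ≠ 0) (x : Fin (2*(n+1))) (h0 : x ≠ 0) (hxb : x ≠ b) :
    ∃ r, emb n b r = x := by
  have hb' : b.val ≠ 0 := fun h0' => hb (Fin.ext h0')
  have h0' : x.val ≠ 0 := fun h0' => h0 (Fin.ext h0')
  have hxb' : x.val ≠ b.val := fun h' => hxb (Fin.ext h')
  have hx := x.isLt
  have hblt := b.isLt
  by_cases hc : x.val < b.val
  · exact ⟨⟨x.val - 1, by omega⟩, Fin.ext (by simp only [emb_val]; split <;> omega)⟩
  · exact ⟨⟨x.val - 2, by omega⟩, Fin.ext (by simp only [emb_val]; split <;> omega)⟩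

lemma succAbove_succ_eq_emb (r : Fin (2*n+1)) (t : Fin (2*n)) :
    (Fin.succ r).succAbove (Fin.succ t) = emb n (Fin.succ r) t := by
  apply Fin.ext
  rw [Fin.succAbove]
  split
  · next h =>
    have h' : t.val + 1 < r.val + 1 := by
      simpa [Fin.lt_def] using h
    simp only [emb_val, Fin.coe_castSucc, Fin.val_succ]
    rw [if_pos h']
  · next h =>
    have h' : ¬ (t.val + 1 < r.val + 1) := by
      simpa [Fin.lt_def] using h
    simp only [emb_val, Fin.val_succ]
    rw [if_neg h']

lemma succ_succAbove_eq_emb (r : Fin (2*n+1)) (t : Fin (2*n)) :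
    Fin.succ (r.succAbove t) = emb n (Fin.succ r) t := by
  apply Fin.ext
  rw [Fin.succAbove]
  split
  · next h =>
    have h' : t.val < r.val := by simpa [Fin.lt_def] using h
    simp only [emb_val, Fin.val_succ, Fin.coe_castSucc]
    rw [if_pos (by omega)]
  · next h =>
    have h' : ¬ (t.val < r.val) := by simpa [Fin.lt_def] using h
    simp only [emb_val, Fin.val_succ]
    rw [if_neg (by omega)]


section Mk

variable {n : ℕ}

def mkFun (b : Fin (2*(n+1))) (σ : Equiv.Perm (Fin (2*n))) : Fin (2*(n+1)) → Fin (2*(n+1)) :=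
  fun k => if h0 : k.val = 0 then ⟨0, by omega⟩ else if h1 : k.val = 1 then b
    else emb n b (σ ⟨k.val - 2, by have := k.isLt; omega⟩)

lemma mkFun_zero (b : Fin (2*(n+1))) (σ : Equiv.Perm (Fin (2*n))) (k : Fin (2*(n+1)))
    (hk : k.val = 0) : mkFun b σ k = ⟨0, by omega⟩ := by
  unfold mkFun; rw [dif_pos hk]

lemma mkFun_one (b : Fin (2*(n+1))) (σ : Equiv.Perm (Fin (2*n))) (k : Fin (2*(n+1)))
    (hk : k.val = 1) : mkFun b σ k = b := by
  unfold mkFun; rw [dif_neg (by omega), dif_pos hk]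

lemma mkFun_ge (b : Fin (2*(n+1))) (σ : Equiv.Perm (Fin (2*n))) (k : Fin (2*(n+1)))
    (hk : 2 ≤ k.val) :
    mkFun b σ k = emb n b (σ ⟨k.val - 2, by have := k.isLt; omega⟩) := by
  unfold mkFun; rw [dif_neg (by omega), dif_neg (by omega)]

lemma mkFun_injective (b : Fin (2*(n+1))) (σ : Equiv.Perm (Fin (2*n))) (hb : b ≠ 0) :
    Function.Injective (mkFun b σ) := by
  have hb' : b.val ≠ 0 := fun h => hb (Fin.ext (by simpa using h))
  intro k l h
  rcases Nat.lt_or_ge k.val 2 with hk | hk <;> rcases Nat.lt_or_ge l.val 2 with hl | hl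
  · -- both small
    by_cases hk0 : k.val = 0 <;> by_cases hl0 : l.val = 0
    · exact Fin.ext (by omega)
    · rw [mkFun_zero b σ k hk0, mkFun_one b σ l (by omega)] at h
      exact absurd (congrArg Fin.val h).symm hb'
    · rw [mkFun_one b σ k (by omega), mkFun_zero b σ l hl0] at h
      exact absurd (congrArg Fin.val h) hb'
    · exact Fin.ext (by omega)
  · exfalso
    rw [mkFun_ge b σ l hl] at h
    rcases Nat.lt_or_ge k.val 1 with hk1 | hk1
    · rw [mkFun_zero b σ k (by omega)] at h
      exact emb_ne_zero b _ (by rw [← h]; rfl)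
    · rw [mkFun_one b σ k (by omega)] at h
      exact emb_ne b _ hb h.symm
  · exfalso
    rw [mkFun_ge b σ k hk] at h
    rcases Nat.lt_or_ge l.val 1 with hl1 | hl1
    · rw [mkFun_zero b σ l (by omega)] at h
      exact emb_ne_zero b _ (by rw [h]; rfl)
    · rw [mkFun_one b σ l (by omega)] at h
      exact emb_ne b _ hb h
  · rw [mkFun_ge b σ k hk, mkFun_ge b σ l hl] at h
    have := σ.injective (emb_injective b h)
    have hv : k.val - 2 = l.val - 2 := congrArg Fin.val this
    exact Fin.ext (by omega)

noncomputable def mkPerm (b : Fin (2*(n+1))) (σ : Equiv.Perm (Fin (2*n))) (hb : b ≠ 0) :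
    Equiv.Perm (Fin (2*(n+1))) :=
  Equiv.ofBijective (mkFun b σ) (Finite.injective_iff_bijective.mp (mkFun_injective b σ hb))

lemma mkPerm_apply (b : Fin (2*(n+1))) (σ : Equiv.Perm (Fin (2*n))) (hb : b ≠ 0)
    (k : Fin (2*(n+1))) : mkPerm b σ hb k = mkFun b σ k := rfl


lemma emb_val_pos (b : Fin (2*(n+1))) (r : Fin (2*n)) : 0 < (emb n b r).val := by
  rw [emb_val]; split <;> omega

lemma mkPerm_mem (b : Fin (2*(n+1))) (σ : Equiv.Perm (Fin (2*n))) (hb : b ≠ 0)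
    (hσ : σ ∈ matchPerms n) : mkPerm b σ hb ∈ matchPerms (n+1) := by
  have hb' : b.val ≠ 0 := fun h => hb (Fin.ext (by simpa using h))
  rw [mem_matchPerms]
  constructor
  · intro i
    by_cases hi : i.val = 0
    · rw [mkPerm_apply, mkPerm_apply, mkFun_zero _ _ _ (show 2 * i.val = 0 by omega),
        mkFun_one _ _ _ (show 2 * i.val + 1 = 1 by omega)]
      exact Fin.lt_def.mpr (by simpa using Nat.pos_of_ne_zero hb')
    · have hi2 : 2 ≤ 2 * i.val := by omega
      rw [mkPerm_apply, mkPerm_apply, mkFun_ge _ _ _ (show 2 ≤ 2 * i.val from hi2),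
        mkFun_ge _ _ _ (show 2 ≤ 2 * i.val + 1 by omega), emb_lt_iff]
      have hσ1 := (mem_matchPerms.mp hσ).1 ⟨i.val - 1, by have := i.isLt; omega⟩
      convert hσ1 using 2 <;> exact Fin.ext (by simp; omega)
  · intro i j hij
    have hij' : i.val < j.val := hij
    by_cases hi : i.val = 0
    · rw [mkPerm_apply, mkPerm_apply, mkFun_zero _ _ _ (show 2 * i.val = 0 by omega),
        mkFun_ge _ _ _ (show 2 ≤ 2 * j.val by omega)]
      exact Fin.lt_def.mpr (by simpa using emb_val_pos b _)
    · rw [mkPerm_apply, mkPerm_apply, mkFun_ge _ _ _ (show 2 ≤ 2 * i.val by omega),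
        mkFun_ge _ _ _ (show 2 ≤ 2 * j.val by omega), emb_lt_iff]
      have hσ2 := (mem_matchPerms.mp hσ).2 ⟨i.val - 1, by have := i.isLt; omega⟩
        ⟨j.val - 1, by have := j.isLt; omega⟩ (by rw [Fin.lt_def]; simp; omega)
      convert hσ2 using 2 <;> exact Fin.ext (by simp; omega)

lemma mkPerm_inj (b b' : Fin (2*(n+1))) (σ σ' : Equiv.Perm (Fin (2*n))) (hb : b ≠ 0)
    (hb' : b' ≠ 0) (h : mkPerm b σ hb = mkPerm b' σ' hb') : b = b' ∧ σ = σ' := by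
  have h1 : b = b' := by
    have h1' := DFunLike.congr_fun h (⟨1, by omega⟩ : Fin (2*(n+1)))
    rw [mkPerm_apply, mkPerm_apply, mkFun_one _ _ _ rfl, mkFun_one _ _ _ rfl] at h1'
    exact h1'
  refine ⟨h1, ?_⟩
  subst h1
  ext t
  have ht := t.isLt
  have this := DFunLike.congr_fun h (⟨t.val + 2, by omega⟩ : Fin (2*(n+1)))
  rw [mkPerm_apply, mkPerm_apply, mkFun_ge _ _ _ (show 2 ≤ t.val + 2 by omega),
    mkFun_ge _ _ _ (show 2 ≤ t.val + 2 by omega)] at this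
  have h2 := emb_injective b this
  have h3 : (⟨t.val + 2 - 2, by omega⟩ : Fin (2*n)) = t := Fin.ext (show t.val + 2 - 2 = t.val by omega)
  rw [h3] at h2
  exact congrArg Fin.val h2

set_option maxHeartbeats 1000000 in
lemma exists_decomp (π : Equiv.Perm (Fin (2*(n+1)))) (hπ : π ∈ matchPerms (n+1)) :
    ∃ (r : Fin (2*n+1)) (σ : Equiv.Perm (Fin (2*n))),
      σ ∈ matchPerms n ∧ mkPerm (Fin.succ r) σ (Fin.succ_ne_zero r) = π := by
  have h0 : π ⟨0, by omega⟩ = ⟨0, by omega⟩ := matchPerms_apply_zero hπ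
  have hb : π ⟨1, by omega⟩ ≠ 0 := by
    intro h
    have h01 : π ⟨1, by omega⟩ = π ⟨0, by omega⟩ := by
      rw [h, h0]; exact (Fin.ext (by simp)).symm
    have := congrArg Fin.val (π.injective h01)
    simp at this
  have key : ∀ t : Fin (2*n), ∃ r, emb n (π ⟨1, by omega⟩) r
      = π ⟨t.val + 2, by have := t.isLt; omega⟩ := by
    intro t
    apply emb_surj _ hb
    · intro h
      have h02 : π ⟨t.val + 2, by have := t.isLt; omega⟩ = π ⟨0, by omega⟩ := by
        rw [h, h0]; exact (Fin.ext (by simp)).symm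
      have := congrArg Fin.val (π.injective h02)
      simp at this
    · intro h
      have := congrArg Fin.val (π.injective h)
      simp at this
  choose g hg using key
  have ginj : Function.Injective g := by
    intro t t' h
    have hgg : π ⟨t.val + 2, by have := t.isLt; omega⟩
        = π ⟨t'.val + 2, by have := t'.isLt; omega⟩ := by
      rw [← hg, ← hg, h]
    have := congrArg Fin.val (π.injective hgg)
    exact Fin.ext (by simpa using this)
  let σ : Equiv.Perm (Fin (2*n)) :=
    Equiv.ofBijective g (Finite.injective_iff_bijective.mp ginj)
  have hσapp : ∀ t, σ t = g t := fun t => rfl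
  have hσmem : σ ∈ matchPerms n := by
    rw [mem_matchPerms]
    constructor
    · intro i
      have hp := (mem_matchPerms.mp hπ).1 ⟨i.val + 1, by have := i.isLt; omega⟩
      have h1 : emb n (π ⟨1, by omega⟩) (g ⟨2*i.val, by have := i.isLt; omega⟩)
          < emb n (π ⟨1, by omega⟩) (g ⟨2*i.val+1, by have := i.isLt; omega⟩) := by
        exact lt_of_eq_of_lt (hg ⟨2*i.val, by have := i.isLt; omega⟩)
          (lt_of_lt_of_eq hp (hg ⟨2*i.val+1, by have := i.isLt; omega⟩).symm)
      exact (emb_lt_iff _).mp h1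
    · intro i j hij
      have hij' : i.val < j.val := hij
      have hp := (mem_matchPerms.mp hπ).2 ⟨i.val + 1, by have := i.isLt; omega⟩
        ⟨j.val + 1, by have := j.isLt; omega⟩ (by rw [Fin.lt_def]; simp; omega)
      have h1 : emb n (π ⟨1, by omega⟩) (g ⟨2*i.val, by have := i.isLt; omega⟩)
          < emb n (π ⟨1, by omega⟩) (g ⟨2*j.val, by have := j.isLt; omega⟩) := by
        exact lt_of_eq_of_lt (hg ⟨2*i.val, by have := i.isLt; omega⟩)
          (lt_of_lt_of_eq hp (hg ⟨2*j.val, by have := j.isLt; omega⟩).symm)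
      exact (emb_lt_iff _).mp h1
  have main_eq : ∀ (b' : Fin (2*(n+1))) (hb' : b' ≠ 0), b' = π ⟨1, by omega⟩ →
      mkPerm b' σ hb' = π := by
    intro b' hb' hE
    refine Equiv.ext fun k => ?_
    have hk := k.isLt
    rw [mkPerm_apply]
    rcases Nat.lt_or_ge k.val 2 with hk2 | hk2
    · rcases Nat.lt_or_ge k.val 1 with hk1 | hk1
      · rw [mkFun_zero _ _ _ (show k.val = 0 by omega)]
        exact h0.symm.trans (congrArg π (show (⟨0, by omega⟩ : Fin (2*(n+1))) = k from Fin.ext (show 0 = k.val by omega)))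
      · rw [mkFun_one _ _ _ (show k.val = 1 by omega)]
        exact hE.trans (congrArg π (show (⟨1, by omega⟩ : Fin (2*(n+1))) = k from Fin.ext (show 1 = k.val by omega)))
    · rw [mkFun_ge _ _ _ hk2, hE]
      exact (hg ⟨k.val - 2, by omega⟩).trans (congrArg π (Fin.ext (show k.val - 2 + 2 = k.val by omega)))
  refine ⟨(π ⟨1, by omega⟩).pred hb, σ, hσmem, main_eq _ _ ?_⟩
  exact Fin.succ_pred _ hb

end Mk

lemma hf_zero (H : Matrix (Fin (2*0)) (Fin (2*0)) ℝ) : hf H = 1 := by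
  unfold hf
  have h1 : matchPerms 0 = {(1 : Equiv.Perm (Fin (2*0)))} := by
    apply Finset.eq_singleton_iff_unique_mem.mpr
    constructor
    · exact Finset.mem_filter.mpr ⟨Finset.mem_univ _, fun i => i.elim0, fun i => i.elim0⟩
    · intro π _
      exact Equiv.ext fun x => x.elim0
  rw [h1, Finset.sum_singleton]
  simp

lemma hf_expand {n : ℕ} (H : Matrix (Fin (2*(n+1))) (Fin (2*(n+1))) ℝ) :
    hf H = ∑ r : Fin (2*n+1),
      H ⟨0, by omega⟩ (Fin.succ r) *
        hf (H.submatrix (emb n (Fin.succ r)) (emb n (Fin.succ r))) := by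
  unfold hf
  simp_rw [Finset.mul_sum]
  rw [Finset.sum_sigma']
  refine (Finset.sum_bij
    (fun (p : Σ _ : Fin (2*n+1), Equiv.Perm (Fin (2*n))) (hp : p ∈ (Finset.univ.sigma fun _ => matchPerms n)) =>
      mkPerm (Fin.succ p.1) p.2 (Fin.succ_ne_zero p.1)) ?_ ?_ ?_ ?_).symm
  · intro p hp
    exact mkPerm_mem _ _ _ (Finset.mem_sigma.mp hp).2
  · intro p hp q hq h
    obtain ⟨h1, h2⟩ := mkPerm_inj _ _ _ _ _ _ h
    obtain ⟨p1, p2⟩ := p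
    obtain ⟨q1, q2⟩ := q
    have : p1 = q1 := Fin.succ_injective _ h1
    subst this
    subst h2
    rfl
  · intro π hπ
    obtain ⟨r, σ, hσ, heq⟩ := exists_decomp π hπ
    exact ⟨⟨r, σ⟩, Finset.mem_sigma.mpr ⟨Finset.mem_univ _, hσ⟩, heq⟩
  · intro p hp
    rw [Fin.prod_univ_succ]
    refine congrArg₂ (· * ·) ?_ ?_
    · rw [mkPerm_apply, mkPerm_apply,
        mkFun_zero _ _ _ (show 2 * ((0 : Fin (n+1)).val) = 0 by simp),
        mkFun_one _ _ _ (show 2 * ((0 : Fin (n+1)).val) + 1 = 1 by simp)]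
    · refine Finset.prod_congr rfl fun i _ => ?_
      have hsv : (Fin.succ i).val = i.val + 1 := Fin.val_succ i
      have hi := i.isLt
      rw [mkPerm_apply, mkPerm_apply,
        mkFun_ge _ _ _ (show 2 ≤ 2 * ((Fin.succ i).val) by omega),
        mkFun_ge _ _ _ (show 2 ≤ 2 * ((Fin.succ i).val) + 1 by omega)]
      exact congrArg₂
        (fun u v => H (emb n (Fin.succ p.1) (p.2 u)) (emb n (Fin.succ p.1) (p.2 v)))
        (Fin.ext (show 2 * i.val = 2 * (Fin.succ i).val - 2 by omega))
        (Fin.ext (show 2 * i.val + 1 = 2 * (Fin.succ i).val + 1 - 2 by omega))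

section Det

variable {n : ℕ}

lemma detC0_zero (A : Matrix (Fin (2*n+1+1)) (Fin (2*n+1+1)) ℝ)
    (hanti : ∀ i j, A j i = - A i j) :
    (A.submatrix (Fin.succ : Fin (2*n+1) → Fin (2*n+1+1)) Fin.succ).det = 0 := by
  have hT : Matrix.transpose (A.submatrix (Fin.succ : Fin (2*n+1) → Fin (2*n+1+1)) Fin.succ)
      = - (A.submatrix Fin.succ Fin.succ) := by
    ext i j
    simp only [Matrix.transpose_apply, Matrix.submatrix_apply, Matrix.neg_apply]
    exact hanti _ _
  have h := Matrix.det_transpose (A.submatrix (Fin.succ : Fin (2*n+1) → Fin (2*n+1+1)) Fin.succ)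
  rw [hT, Matrix.det_neg, Fintype.card_fin] at h
  rw [Odd.neg_one_pow ⟨n, by ring⟩] at h
  linarith

lemma vanish_row (A : Matrix (Fin (2*n+1+1)) (Fin (2*n+1+1)) ℝ)
    (hanti : ∀ i j, A j i = - A i j) (r : Fin (2*n+1)) :
    ∑ j : Fin (2*n+1), (-1:ℝ)^(r.val + j.val) * A (Fin.succ r) (Fin.succ j) *
      (A.submatrix (emb n (Fin.succ r)) (emb n (Fin.succ j))).det = 0 := by
  have h := Matrix.det_succ_row (A.submatrix (Fin.succ : Fin (2*n+1) → Fin (2*n+1+1)) Fin.succ) r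
  rw [detC0_zero A hanti] at h
  calc ∑ j : Fin (2*n+1), (-1:ℝ)^(r.val + j.val) * A (Fin.succ r) (Fin.succ j) *
      (A.submatrix (emb n (Fin.succ r)) (emb n (Fin.succ j))).det
      = ∑ j : Fin (2*n+1), (-1:ℝ)^(r.val + j.val) *
          (A.submatrix (Fin.succ : Fin (2*n+1) → Fin (2*n+1+1)) Fin.succ) r j *
          (((A.submatrix (Fin.succ : Fin (2*n+1) → Fin (2*n+1+1)) Fin.succ)).submatrix
            r.succAbove j.succAbove).det := by
        refine Finset.sum_congr rfl fun j _ => ?_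
        rw [Matrix.submatrix_submatrix]
        rw [show Fin.succ ∘ r.succAbove = emb n (Fin.succ r) from funext (succ_succAbove_eq_emb r)]
        rw [show Fin.succ ∘ j.succAbove = emb n (Fin.succ j) from funext (succ_succAbove_eq_emb j)]
        rfl
    _ = 0 := h.symm

lemma vanish_col (A : Matrix (Fin (2*n+1+1)) (Fin (2*n+1+1)) ℝ)
    (hanti : ∀ i j, A j i = - A i j) (j : Fin (2*n+1)) :
    ∑ r : Fin (2*n+1), (-1:ℝ)^(r.val + j.val) * A (Fin.succ r) (Fin.succ j) *
      (A.submatrix (emb n (Fin.succ r)) (emb n (Fin.succ j))).det = 0 := by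
  have h := Matrix.det_succ_column (A.submatrix (Fin.succ : Fin (2*n+1) → Fin (2*n+1+1)) Fin.succ) j
  rw [detC0_zero A hanti] at h
  calc ∑ r : Fin (2*n+1), (-1:ℝ)^(r.val + j.val) * A (Fin.succ r) (Fin.succ j) *
      (A.submatrix (emb n (Fin.succ r)) (emb n (Fin.succ j))).det
      = ∑ r : Fin (2*n+1), (-1:ℝ)^(r.val + j.val) *
          (A.submatrix (Fin.succ : Fin (2*n+1) → Fin (2*n+1+1)) Fin.succ) r j *
          (((A.submatrix (Fin.succ : Fin (2*n+1) → Fin (2*n+1+1)) Fin.succ)).submatrix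
            r.succAbove j.succAbove).det := by
        refine Finset.sum_congr rfl fun r _ => ?_
        rw [Matrix.submatrix_submatrix]
        rw [show Fin.succ ∘ r.succAbove = emb n (Fin.succ r) from funext (succ_succAbove_eq_emb r)]
        rw [show Fin.succ ∘ j.succAbove = emb n (Fin.succ j) from funext (succ_succAbove_eq_emb j)]
        rfl
    _ = 0 := h.symm

lemma det_expand (A : Matrix (Fin (2*n+1+1)) (Fin (2*n+1+1)) ℝ)
    (hanti : ∀ i j, A j i = - A i j) :
    A.det = ∑ r : Fin (2*n+1), ∑ j : Fin (2*n+1),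
      (-1 : ℝ)^(r.val + j.val) * (A (Fin.succ r) 0 * A (Fin.succ j) 0) *
        (A.submatrix (emb n (Fin.succ r)) (emb n (Fin.succ j))).det := by
  have hdiag : ∀ i, A i i = 0 := fun i => by have := hanti i i; linarith
  rw [Matrix.det_succ_column_zero, Fin.sum_univ_succ, hdiag 0]
  rw [show ((-1:ℝ)^((0 : Fin (2*n+1+1)).val) * 0 * (A.submatrix (0 : Fin (2*n+1+1)).succAbove Fin.succ).det) = 0 by ring, zero_add]
  refine Finset.sum_congr rfl fun r _ => ?_
  rw [Matrix.det_succ_row_zero, Finset.mul_sum]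
  refine Finset.sum_congr rfl fun j _ => ?_
  rw [Matrix.submatrix_apply, Matrix.submatrix_submatrix]
  rw [show (Fin.succ r).succAbove 0 = 0 from
    (Fin.succAbove_of_castSucc_lt _ _ (by simp [Fin.lt_def])).trans Fin.castSucc_zero]
  rw [show (Fin.succ r).succAbove ∘ Fin.succ = emb n (Fin.succ r) from
    funext (succAbove_succ_eq_emb r)]
  rw [show Fin.succ ∘ j.succAbove = emb n (Fin.succ j) from funext (succ_succAbove_eq_emb j)]
  rw [hanti (Fin.succ j) 0, Fin.val_succ]
  ring

lemma det_eq_sum_sq (A : Matrix (Fin (2*n+1+1)) (Fin (2*n+1+1)) ℝ)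
    (hanti : ∀ i j, A j i = - A i j)
    (hcauchy : ∀ r j : Fin (2*n+1), r ≠ j →
      A (Fin.succ r) 0 * A (Fin.succ j) 0 =
        A (Fin.succ j) (Fin.succ r) * (A (Fin.succ r) 0 - A (Fin.succ j) 0)) :
    A.det = ∑ r : Fin (2*n+1), (A (Fin.succ r) 0)^2 *
      (A.submatrix (emb n (Fin.succ r)) (emb n (Fin.succ r))).det := by
  have hdiag : ∀ i, A i i = 0 := fun i => by have := hanti i i; linarith
  rw [det_expand A hanti]
  have key : ∀ r j : Fin (2*n+1),
      (-1 : ℝ)^(r.val + j.val) * (A (Fin.succ r) 0 * A (Fin.succ j) 0) *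
        (A.submatrix (emb n (Fin.succ r)) (emb n (Fin.succ j))).det
      = (if r = j then (A (Fin.succ r) 0)^2 *
            (A.submatrix (emb n (Fin.succ r)) (emb n (Fin.succ r))).det else 0)
        + (-((A (Fin.succ r) 0)) * ((-1 : ℝ)^(r.val + j.val) * A (Fin.succ r) (Fin.succ j) *
            (A.submatrix (emb n (Fin.succ r)) (emb n (Fin.succ j))).det))
        + ((A (Fin.succ j) 0) * ((-1 : ℝ)^(r.val + j.val) * A (Fin.succ r) (Fin.succ j) *
            (A.submatrix (emb n (Fin.succ r)) (emb n (Fin.succ j))).det)) := by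
    intro r j
    by_cases h : r = j
    · subst h
      rw [if_pos rfl, hdiag (Fin.succ r)]
      have : (-1 : ℝ)^(r.val + r.val) = 1 := Even.neg_one_pow ⟨r.val, by ring⟩
      rw [this]; ring
    · rw [if_neg h]
      have hc := hcauchy r j h
      have haj : A (Fin.succ j) (Fin.succ r) = - A (Fin.succ r) (Fin.succ j) := hanti _ _
      rw [haj] at hc
      linear_combination ((-1 : ℝ)^(r.val + j.val) *
        (A.submatrix (emb n (Fin.succ r)) (emb n (Fin.succ j))).det) * hc
  calc ∑ r : Fin (2*n+1), ∑ j : Fin (2*n+1),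
      (-1 : ℝ)^(r.val + j.val) * (A (Fin.succ r) 0 * A (Fin.succ j) 0) *
        (A.submatrix (emb n (Fin.succ r)) (emb n (Fin.succ j))).det
      = ∑ r : Fin (2*n+1), ∑ j : Fin (2*n+1),
        ((if r = j then (A (Fin.succ r) 0)^2 *
            (A.submatrix (emb n (Fin.succ r)) (emb n (Fin.succ r))).det else 0)
        + (-((A (Fin.succ r) 0)) * ((-1 : ℝ)^(r.val + j.val) * A (Fin.succ r) (Fin.succ j) *
            (A.submatrix (emb n (Fin.succ r)) (emb n (Fin.succ j))).det))
        + ((A (Fin.succ j) 0) * ((-1 : ℝ)^(r.val + j.val) * A (Fin.succ r) (Fin.succ j) *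
            (A.submatrix (emb n (Fin.succ r)) (emb n (Fin.succ j))).det))) := by
        exact Finset.sum_congr rfl fun r _ => Finset.sum_congr rfl fun j _ => key r j
    _ = ∑ r : Fin (2*n+1), (A (Fin.succ r) 0)^2 *
        (A.submatrix (emb n (Fin.succ r)) (emb n (Fin.succ r))).det := by
        simp_rw [Finset.sum_add_distrib]
        have hD : ∀ r : Fin (2*n+1), ∑ j : Fin (2*n+1),
            (if r = j then (A (Fin.succ r) 0)^2 *
              (A.submatrix (emb n (Fin.succ r)) (emb n (Fin.succ r))).det else 0)
            = (A (Fin.succ r) 0)^2 *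
              (A.submatrix (emb n (Fin.succ r)) (emb n (Fin.succ r))).det := by
          intro r
          rw [Finset.sum_ite_eq]
          simp
        have hE1 : ∀ r : Fin (2*n+1), ∑ j : Fin (2*n+1),
            (-((A (Fin.succ r) 0)) * ((-1 : ℝ)^(r.val + j.val) * A (Fin.succ r) (Fin.succ j) *
              (A.submatrix (emb n (Fin.succ r)) (emb n (Fin.succ j))).det)) = 0 := by
          intro r
          rw [← Finset.mul_sum, vanish_row A hanti r, mul_zero]
        have hE2 : ∑ r : Fin (2*n+1), ∑ j : Fin (2*n+1),
            ((A (Fin.succ j) 0) * ((-1 : ℝ)^(r.val + j.val) * A (Fin.succ r) (Fin.succ j) *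
              (A.submatrix (emb n (Fin.succ r)) (emb n (Fin.succ j))).det)) = 0 := by
          rw [Finset.sum_comm]
          refine Finset.sum_eq_zero fun j _ => ?_
          rw [← Finset.mul_sum, vanish_col A hanti j, mul_zero]
        simp_rw [hD, hE1]
        rw [hE2]
        simp
end Det

end Statement12Aux

open Statement12Aux

theorem statement12_aux : ∀ (n : ℕ) (lam : Fin (2*n) → ℝ), Function.Injective lam →
    (Matrix.of fun i j : Fin (2 * n) =>
        if i = j then (0 : ℝ) else 1 / (lam i - lam j)).det =
      hf (Matrix.of fun i j => if i = j then 0 else 1 / (lam i - lam j) ^ 2) := by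
  intro n
  induction n with
  | zero =>
    intro lam _
    rw [hf_zero]
    exact Matrix.det_fin_zero
  | succ n IH =>
    intro lam hlam
    have hne : ∀ i j : Fin (2*(n+1)), i ≠ j → lam i - lam j ≠ 0 := by
      intro i j hij
      exact sub_ne_zero.mpr (fun hc => hij (hlam hc))
    have hanti : ∀ i j : Fin (2*(n+1)),
        (Matrix.of fun i j : Fin (2 * (n+1)) =>
          if i = j then (0 : ℝ) else 1 / (lam i - lam j)) j i
        = - (Matrix.of fun i j : Fin (2 * (n+1)) =>
          if i = j then (0 : ℝ) else 1 / (lam i - lam j)) i j := by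
      intro i j
      simp only [Matrix.of_apply]
      by_cases h : i = j
      · subst h; simp
      · rw [if_neg h, if_neg (Ne.symm h)]
        have h1 := hne i j h
        have h2 := hne j i (Ne.symm h)
        field_simp
        ring
    have hcauchy : ∀ r j : Fin (2*n+1), r ≠ j →
        (Matrix.of fun i j : Fin (2 * (n+1)) =>
          if i = j then (0 : ℝ) else 1 / (lam i - lam j)) (Fin.succ r) 0 *
        (Matrix.of fun i j : Fin (2 * (n+1)) =>
          if i = j then (0 : ℝ) else 1 / (lam i - lam j)) (Fin.succ j) 0 =
        (Matrix.of fun i j : Fin (2 * (n+1)) =>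
          if i = j then (0 : ℝ) else 1 / (lam i - lam j)) (Fin.succ j) (Fin.succ r) *
        ((Matrix.of fun i j : Fin (2 * (n+1)) =>
          if i = j then (0 : ℝ) else 1 / (lam i - lam j)) (Fin.succ r) 0 -
         (Matrix.of fun i j : Fin (2 * (n+1)) =>
          if i = j then (0 : ℝ) else 1 / (lam i - lam j)) (Fin.succ j) 0) := by
      intro r j hrj
      simp only [Matrix.of_apply]
      rw [if_neg (Fin.succ_ne_zero r), if_neg (Fin.succ_ne_zero j),
        if_neg (fun hc => hrj (Fin.succ_injective _ hc).symm)]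
      have h1 := hne (Fin.succ r) 0 (Fin.succ_ne_zero r)
      have h2 := hne (Fin.succ j) 0 (Fin.succ_ne_zero j)
      have h3 := hne (Fin.succ j) (Fin.succ r) (fun hc => hrj (Fin.succ_injective _ hc).symm)
      field_simp
      ring
    refine Eq.trans (det_eq_sum_sq _ hanti hcauchy) ?_
    rw [hf_expand]
    refine Finset.sum_congr rfl fun r _ => ?_
    have hb := Fin.succ_ne_zero r
    refine congrArg₂ (· * ·) ?_ ?_
    · simp only [Matrix.of_apply]
      rw [if_neg (Fin.succ_ne_zero r),
        if_neg (show (⟨0, by omega⟩ : Fin (2*(n+1))) ≠ Fin.succ r from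
          fun hc => Fin.succ_ne_zero r (hc.symm.trans (Fin.ext (by simp))))]
      have h0 : lam 0 = lam ⟨0, by omega⟩ := congrArg lam (Fin.ext (by simp))
      rw [← h0, div_pow, one_pow,
        show ((lam 0 - lam (Fin.succ r))^2 : ℝ) = (lam (Fin.succ r) - lam 0)^2 from by ring]
    · have hAsub : (Matrix.of fun i j : Fin (2 * (n+1)) =>
          if i = j then (0 : ℝ) else 1 / (lam i - lam j)).submatrix
            (emb n (Fin.succ r)) (emb n (Fin.succ r))
          = Matrix.of (fun i j : Fin (2*n) =>
            if i = j then (0 : ℝ) else 1 / ((lam ∘ emb n (Fin.succ r)) i - (lam ∘ emb n (Fin.succ r)) j)) := by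
        ext i j
        simp only [Matrix.submatrix_apply, Matrix.of_apply, Function.comp_apply,
          (emb_injective (Fin.succ r)).eq_iff]
      have hHsub : (Matrix.of fun i j : Fin (2 * (n+1)) =>
          if i = j then (0 : ℝ) else 1 / (lam i - lam j) ^ 2).submatrix
            (emb n (Fin.succ r)) (emb n (Fin.succ r))
          = Matrix.of (fun i j : Fin (2*n) =>
            if i = j then (0 : ℝ) else 1 / ((lam ∘ emb n (Fin.succ r)) i - (lam ∘ emb n (Fin.succ r)) j) ^ 2) := by
        ext i j
        simp only [Matrix.submatrix_apply, Matrix.of_apply, Function.comp_apply,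
          (emb_injective (Fin.succ r)).eq_iff]
      rw [hAsub, hHsub]
      exact IH (lam ∘ emb n (Fin.succ r)) (hlam.comp (emb_injective _))

theorem statement12 (n : ℕ) (hn : 1 ≤ n) (lam : Fin (2 * n) → ℝ)
    (hlam : Function.Injective lam) :
    (Matrix.of fun i j : Fin (2 * n) =>
        if i = j then (0 : ℝ) else 1 / (lam i - lam j)).det =
      hf (Matrix.of fun i j => if i = j then 0 else 1 / (lam i - lam j) ^ 2) :=
  statement12_aux n lam hlam
end

section
/- Let k ≥ 3 and let z_1,…,z_k be distinct real numbers. Then Σ_σ ∏_{i=1}^k 1/(z_i − z_{σ(i)}) = 0, where the sum is over all permutations σ of {1,…,k} that consist of a single cycle of length k. -/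
open scoped BigOperators

open Equiv Equiv.Perm Finset in
private lemma fullCycle_iff {α : Type*} [DecidableEq α] [Fintype α]
    (hcard : 2 ≤ Fintype.card α) (τ : Equiv.Perm α) :
    (τ.IsCycle ∧ τ.support = Finset.univ) ↔ ∀ x y, τ.SameCycle x y := by
  constructor
  · rintro ⟨hc, hs⟩ x y
    exact hc.sameCycle (mem_support.mp (hs ▸ mem_univ x)) (mem_support.mp (hs ▸ mem_univ y))
  · intro h
    have hτ1 : ∃ x, τ x ≠ x := by
      by_contra hfix
      push_neg at hfix
      have hτ : τ = 1 := Equiv.ext hfix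
      obtain ⟨a, b, hab⟩ := Fintype.exists_pair_of_one_lt_card hcard
      exact hab (by simpa [hτ] using h a b)
    obtain ⟨x, hx⟩ := hτ1
    refine ⟨⟨x, hx, fun y _ => h x y⟩, ?_⟩
    ext y
    simp only [mem_support, mem_univ, iff_true]
    intro hy
    obtain ⟨m, hm⟩ := h x y
    apply hx
    have hcomm : (τ ^ m) (τ x) = τ ((τ ^ m) x) := by
      simp only [← Equiv.Perm.mul_apply]
      rw [((Commute.refl τ).zpow_left m).eq]
    have hkey : (τ ^ m) (τ x) = (τ ^ m) x := by rw [hcomm, hm, hy]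
    exact (τ ^ m).injective hkey

private def insPerm {n : ℕ} (σ : Equiv.Perm (Fin n)) (a : Fin n) : Equiv.Perm (Fin (n + 1)) :=
  Equiv.Perm.decomposeFin.symm ((σ a).succ, σ)

private lemma insPerm_zero {n : ℕ} (σ : Equiv.Perm (Fin n)) (a : Fin n) :
    insPerm σ a 0 = (σ a).succ :=
  Equiv.Perm.decomposeFin_symm_apply_zero _ _

private lemma insPerm_succ {n : ℕ} (σ : Equiv.Perm (Fin n)) (a j : Fin n) :
    insPerm σ a j.succ = if j = a then 0 else (σ j).succ := by
  rw [insPerm, Equiv.Perm.decomposeFin_symm_apply_succ]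
  by_cases h : j = a
  · rw [if_pos h, h, Equiv.swap_apply_right]
  · rw [if_neg h]
    exact Equiv.swap_apply_of_ne_of_ne (Fin.succ_ne_zero _)
      (fun hc => h (σ.injective (Fin.succ_injective _ hc)))

private lemma sameCycle_ins {n : ℕ} (σ : Equiv.Perm (Fin n)) (a : Fin n) (i j : Fin n)
    (m : ℕ) (h : (σ ^ m) i = j) : (insPerm σ a).SameCycle i.succ j.succ := by
  induction m generalizing i with
  | zero =>
    simp only [pow_zero, Equiv.Perm.one_apply] at h
    exact h ▸ Equiv.Perm.SameCycle.refl _ _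
  | succ t ih =>
    have h' : (σ ^ t) (σ i) = j := by
      rw [← h, pow_succ, Equiv.Perm.mul_apply]
    refine Equiv.Perm.SameCycle.trans ?_ (ih (σ i) h')
    by_cases hia : i = a
    · subst hia
      refine ⟨2, ?_⟩
      rw [show ((2 : ℤ)) = ((2 : ℕ) : ℤ) from rfl, zpow_natCast, pow_two,
        Equiv.Perm.mul_apply, insPerm_succ, if_pos rfl, insPerm_zero]
    · exact ⟨1, by rw [zpow_one, insPerm_succ, if_neg hia]⟩

private lemma sameCycle_contract {n : ℕ} (p : Fin (n + 1)) (e : Equiv.Perm (Fin n))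
    (j : Fin n) (m : ℕ) : ∀ i : Fin n,
    ((Equiv.Perm.decomposeFin.symm (p, e) : Equiv.Perm (Fin (n + 1))) ^ m) i.succ = j.succ →
    e.SameCycle i j := by
  induction m using Nat.strong_induction_on with
  | _ m ih =>
    intro i h
    set τ : Equiv.Perm (Fin (n + 1)) := Equiv.Perm.decomposeFin.symm (p, e) with hτ
    match m with
    | 0 =>
      simp only [pow_zero, Equiv.Perm.one_apply] at h
      exact (Fin.succ_injective _ h) ▸ Equiv.Perm.SameCycle.refl _ _
    | 1 =>
      rw [pow_one, hτ, Equiv.Perm.decomposeFin_symm_apply_succ] at h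
      by_cases hc : (e i).succ = p
      · rw [hc, Equiv.swap_apply_right] at h
        exact absurd h.symm (Fin.succ_ne_zero _)
      · rw [Equiv.swap_apply_of_ne_of_ne (Fin.succ_ne_zero _) hc] at h
        exact ⟨1, by rw [zpow_one]; exact Fin.succ_injective _ h⟩
    | (u + 2) =>
      have hstep : τ i.succ = Equiv.swap 0 p ((e i).succ) :=
        Equiv.Perm.decomposeFin_symm_apply_succ e p i
      by_cases hc : (e i).succ = p
      · -- τ i.succ = 0, τ 0 = p = (e i).succ
        have h0 : τ i.succ = 0 := by rw [hstep, hc, Equiv.swap_apply_right]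
        have hτ0 : τ 0 = (e i).succ := by
          rw [hc, hτ]; exact Equiv.Perm.decomposeFin_symm_apply_zero _ _
        have h2 : (τ ^ u) ((e i).succ) = j.succ := by
          have hexp : (τ ^ (u + 2)) i.succ = (τ ^ u) (τ (τ i.succ)) := by
            rw [pow_succ, pow_succ, Equiv.Perm.mul_apply, Equiv.Perm.mul_apply]
          rw [hexp, h0, hτ0] at h
          exact h
        exact Equiv.Perm.SameCycle.trans ⟨1, by rw [zpow_one]⟩ (ih u (by omega) _ h2)
      · have h1 : τ i.succ = (e i).succ := by
          rw [hstep, Equiv.swap_apply_of_ne_of_ne (Fin.succ_ne_zero _) hc]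
        have h2 : (τ ^ (u + 1)) ((e i).succ) = j.succ := by
          rw [← h1, ← Equiv.Perm.mul_apply, ← pow_succ]
          exact h
        exact Equiv.Perm.SameCycle.trans ⟨1, by rw [zpow_one]⟩ (ih (u + 1) (by omega) _ h2)

open scoped Classical in
private def contractPerm {n : ℕ} [NeZero n] (τ : Equiv.Perm (Fin (n + 1))) :
    Equiv.Perm (Fin n) × Fin n :=
  ((Equiv.Perm.decomposeFin τ).2, if h : τ⁻¹ 0 = 0 then 0 else (τ⁻¹ 0).pred h)

private lemma scalar_identity (A B Z : ℝ) (h1 : A ≠ Z) (h2 : Z ≠ B) (h3 : A ≠ B) :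
    1 / (Z - B) * (1 / (A - Z)) = (1 / (Z - B) + 1 / (A - Z)) * (1 / (A - B)) := by
  have d1 : Z - B ≠ 0 := sub_ne_zero.mpr h2
  have d2 : A - Z ≠ 0 := sub_ne_zero.mpr h1
  have d3 : A - B ≠ 0 := sub_ne_zero.mpr h3
  field_simp
  ring

open scoped Classical in
/-- The sum over all permutations of `{1,…,k}` consisting of a single cycle of length
`k` (i.e. cycles whose support is everything). -/
theorem statement14 (k : ℕ) (hk : 3 ≤ k) (z : Fin k → ℝ)
    (hz : Function.Injective z) :
    ∑ σ ∈ Finset.univ.filter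
        (fun σ : Equiv.Perm (Fin k) => σ.IsCycle ∧ σ.support = Finset.univ),
      ∏ i : Fin k, 1 / (z i - z (σ i)) = 0 := by
  obtain ⟨m, rfl⟩ : ∃ m, k = (m + 2) + 1 := ⟨k - 3, by omega⟩
  clear hk
  have card2 : 2 ≤ Fintype.card (Fin (m + 2)) := by simp
  have card3 : 2 ≤ Fintype.card (Fin (m + 2 + 1)) := by simp
  set t : Finset (Equiv.Perm (Fin (m + 2)) × Fin (m + 2)) :=
    (Finset.univ.filter
      (fun σ : Equiv.Perm (Fin (m + 2)) => σ.IsCycle ∧ σ.support = Finset.univ)) ×ˢ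
      Finset.univ with ht
  -- membership forward
  have hi : ∀ τ ∈ Finset.univ.filter
      (fun σ : Equiv.Perm (Fin (m + 2 + 1)) => σ.IsCycle ∧ σ.support = Finset.univ),
      contractPerm τ ∈ t := by
    intro τ hτ
    have hfull : ∀ x y, τ.SameCycle x y :=
      (fullCycle_iff card3 τ).mp (Finset.mem_filter.mp hτ).2
    rw [ht, Finset.mem_product]
    refine ⟨Finset.mem_filter.mpr ⟨Finset.mem_univ _, ?_⟩, Finset.mem_univ _⟩
    rw [fullCycle_iff card2]
    intro i j
    obtain ⟨⟨p, e⟩, rfl⟩ := Equiv.Perm.decomposeFin.symm.surjective τ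
    obtain ⟨u, _, hu⟩ := (hfull i.succ j.succ).exists_pow_eq'
    have he : (contractPerm (Equiv.Perm.decomposeFin.symm (p, e))).1 = e := by
      show (Equiv.Perm.decomposeFin (Equiv.Perm.decomposeFin.symm (p, e))).2 = e
      rw [Equiv.apply_symm_apply]
    rw [he]
    exact sameCycle_contract p e j u i hu
  -- membership backward
  have hj : ∀ q ∈ t, insPerm q.1 q.2 ∈ Finset.univ.filter
      (fun σ : Equiv.Perm (Fin (m + 2 + 1)) => σ.IsCycle ∧ σ.support = Finset.univ) := by
    rintro ⟨σ, a⟩ hq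
    rw [ht, Finset.mem_product] at hq
    have hσ : ∀ x y, σ.SameCycle x y :=
      (fullCycle_iff card2 σ).mp (Finset.mem_filter.mp hq.1).2
    refine Finset.mem_filter.mpr ⟨Finset.mem_univ _, ?_⟩
    rw [fullCycle_iff card3]
    have hall : ∀ u : Fin (m + 2 + 1), (insPerm σ a).SameCycle 0 u := by
      intro u
      refine Fin.cases ?_ ?_ u
      · exact Equiv.Perm.SameCycle.refl _ _
      · intro j
        refine Equiv.Perm.SameCycle.trans (y := (σ a).succ) ⟨1, ?_⟩ ?_
        · rw [zpow_one]; exact insPerm_zero σ a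
        · obtain ⟨u', _, hu'⟩ := (hσ (σ a) j).exists_pow_eq'
          exact sameCycle_ins σ a (σ a) j u' hu'
    exact fun x y => (hall x).symm.trans (hall y)
  -- left inverse
  have hli : ∀ τ ∈ Finset.univ.filter
      (fun σ : Equiv.Perm (Fin (m + 2 + 1)) => σ.IsCycle ∧ σ.support = Finset.univ),
      insPerm (contractPerm τ).1 (contractPerm τ).2 = τ := by
    intro τ hτ
    have hsupp := (Finset.mem_filter.mp hτ).2.2
    have hτ0 : τ 0 ≠ 0 := Equiv.Perm.mem_support.mp (hsupp ▸ Finset.mem_univ (0 : Fin (m + 2 + 1)))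
    obtain ⟨⟨p, e⟩, rfl⟩ := Equiv.Perm.decomposeFin.symm.surjective τ
    set τ : Equiv.Perm (Fin (m + 2 + 1)) := Equiv.Perm.decomposeFin.symm (p, e) with hττ
    have hp0 : p ≠ 0 := by
      rwa [hττ, Equiv.Perm.decomposeFin_symm_apply_zero] at hτ0
    have hpsucc : (p.pred hp0).succ = p := Fin.succ_pred _ _
    have hinv : τ⁻¹ 0 = (e⁻¹ (p.pred hp0)).succ := by
      apply τ.injective
      rw [Equiv.Perm.coe_inv, Equiv.apply_symm_apply, hττ, Equiv.Perm.decomposeFin_symm_apply_succ,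
        Equiv.Perm.coe_inv, Equiv.apply_symm_apply, hpsucc, Equiv.swap_apply_right]
    have hC : contractPerm τ = (e, e⁻¹ (p.pred hp0)) := by
      rw [contractPerm]
      congr 1
      · rw [hττ, Equiv.apply_symm_apply]
      · rw [dif_neg (by rw [hinv]; exact Fin.succ_ne_zero _)]
        simp only [hinv, Fin.pred_succ]
    rw [hC, insPerm, Equiv.Perm.coe_inv, Equiv.apply_symm_apply, hpsucc, hττ]
  -- right inverse
  have hri : ∀ q ∈ t, contractPerm (insPerm q.1 q.2) = q := by
    rintro ⟨σ, a⟩ _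
    have h0 : insPerm σ a a.succ = 0 := by rw [insPerm_succ, if_pos rfl]
    have hinv : (insPerm σ a)⁻¹ 0 = a.succ := by
      rw [← h0, Equiv.Perm.coe_inv, Equiv.symm_apply_apply]
    rw [contractPerm]
    refine Prod.ext ?_ ?_
    · show (Equiv.Perm.decomposeFin (Equiv.Perm.decomposeFin.symm ((σ a).succ, σ))).2 = σ
      rw [Equiv.apply_symm_apply]
    · show (if h : (insPerm σ a)⁻¹ 0 = 0 then (0 : Fin (m + 2))
        else ((insPerm σ a)⁻¹ 0).pred h) = a
      rw [dif_neg (by rw [hinv]; exact Fin.succ_ne_zero _)]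
      simp only [hinv, Fin.pred_succ]
  rw [Finset.sum_nbij' (t := t)
    (g := fun q : Equiv.Perm (Fin (m + 2)) × Fin (m + 2) =>
      ∏ i : Fin (m + 2 + 1), 1 / (z i - z (insPerm q.1 q.2 i)))
    contractPerm (fun q => insPerm q.1 q.2) hi hj hli hri
    (fun τ hτ => by conv_lhs => rw [← hli τ hτ])]
  rw [ht, Finset.sum_product]
  apply Finset.sum_eq_zero
  intro σ hσ
  have hsupp := (Finset.mem_filter.mp hσ).2.2
  have hfix : ∀ a : Fin (m + 2), σ a ≠ a :=
    fun a => Equiv.Perm.mem_support.mp (hsupp ▸ Finset.mem_univ a)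
  have hterm : ∀ a : Fin (m + 2),
      (∏ i : Fin (m + 2 + 1), 1 / (z i - z (insPerm σ a i))) =
      (1 / (z 0 - z ((σ a).succ)) + 1 / (z a.succ - z 0)) *
        ∏ j : Fin (m + 2), 1 / (z j.succ - z ((σ j).succ)) := by
    intro a
    rw [Fin.prod_univ_succ, insPerm_zero]
    have e1 : (∏ j : Fin (m + 2), 1 / (z j.succ - z (insPerm σ a j.succ))) =
        1 / (z a.succ - z 0) * ∏ j ∈ Finset.univ.erase a, 1 / (z j.succ - z ((σ j).succ)) := by
      rw [← Finset.mul_prod_erase Finset.univ _ (Finset.mem_univ a)]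
      congr 1
      · rw [insPerm_succ, if_pos rfl]
      · exact Finset.prod_congr rfl fun j hj => by
          rw [insPerm_succ, if_neg (Finset.ne_of_mem_erase hj)]
    have e2 : (∏ j : Fin (m + 2), 1 / (z j.succ - z ((σ j).succ))) =
        1 / (z a.succ - z ((σ a).succ)) *
          ∏ j ∈ Finset.univ.erase a, 1 / (z j.succ - z ((σ j).succ)) :=
      (Finset.mul_prod_erase Finset.univ _ (Finset.mem_univ a)).symm
    rw [e1, e2, ← mul_assoc, ← mul_assoc]
    congr 1
    apply scalar_identity
    · exact fun hc => Fin.succ_ne_zero a (hz hc)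
    · exact fun hc => (Fin.succ_ne_zero (σ a)) (hz hc).symm
    · exact fun hc => hfix a (Fin.succ_injective _ (hz hc.symm))
  rw [Finset.sum_congr rfl fun a _ => hterm a, ← Finset.sum_mul]
  have hsum : (∑ a : Fin (m + 2), (1 / (z 0 - z ((σ a).succ)) + 1 / (z a.succ - z 0))) = 0 := by
    rw [Finset.sum_add_distrib]
    have r1 : (∑ a : Fin (m + 2), 1 / (z 0 - z ((σ a).succ))) =
        ∑ b : Fin (m + 2), 1 / (z 0 - z b.succ) :=
      Equiv.sum_comp σ (fun b => 1 / (z 0 - z b.succ))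
    have r2 : ∀ b : Fin (m + 2), 1 / (z b.succ - z 0) = -(1 / (z 0 - z b.succ)) := by
      intro b
      rw [← neg_sub, one_div, one_div, inv_neg]
    rw [r1, Finset.sum_congr rfl fun b _ => r2 b, Finset.sum_neg_distrib, add_neg_cancel]
  rw [hsum, zero_mul]
end

section
/- Let k ≥ 3 and let z_1,…,z_k be distinct real numbers. Then Σ_{σ ∈ S_k} ∏_{i=1}^k 1/(z_{σ(i)} − z_{σ(i+1)}) = 0, where S_k is the set of all permutations of {1,…,k} and the index is cyclic, i.e., σ(k+1) := σ(1). -/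
open scoped BigOperators

open Finset

private lemma cyc_prod {n : ℕ} [NeZero n] (F : Fin n → Fin n → ℝ) (g : Fin n → Fin n)
    (c : Fin n) :
    ∏ i, F (g (i + c)) (g (i + c + 1)) = ∏ i, F (g i) (g (i + 1)) :=
  Fintype.prod_equiv (Equiv.addRight c) _ _ (fun i => by simp)

private lemma partial_frac (x y t : ℝ) (hxy : x ≠ y) (hxt : x ≠ t) (hyt : y ≠ t) :
    1 / (x - t) * (1 / (t - y)) = 1 / (x - y) * (1 / (x - t) - 1 / (y - t)) := by
  have h1 : x - t ≠ 0 := sub_ne_zero.mpr hxt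
  have h2 : y - t ≠ 0 := sub_ne_zero.mpr hyt
  have h3 : x - y ≠ 0 := sub_ne_zero.mpr hxy
  have h4 : t - y ≠ 0 := fun h => h2 (by have := sub_eq_zero.mp h; simp [this])
  field_simp
  ring

private def sfun (m : ℕ) (g : Equiv.Perm (Fin m)) : Fin (m + 1) → Fin (m + 1) :=
  Fin.cons (Fin.last m) (fun j => (g j).castSucc)

private lemma sfun_zero (m : ℕ) (g : Equiv.Perm (Fin m)) : sfun m g 0 = Fin.last m := rfl

private lemma sfun_succ (m : ℕ) (g : Equiv.Perm (Fin m)) (j : Fin m) :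
    sfun m g j.succ = (g j).castSucc := by
  simp [sfun]

private lemma sfun_inj (m : ℕ) (g : Equiv.Perm (Fin m)) : Function.Injective (sfun m g) := by
  intro x y hxy
  induction x using Fin.cases with
  | zero =>
    induction y using Fin.cases with
    | zero => rfl
    | succ j =>
      rw [sfun_zero, sfun_succ] at hxy
      exact absurd hxy.symm (Fin.castSucc_lt_last (g j)).ne
  | succ i =>
    induction y using Fin.cases with
    | zero =>
      rw [sfun_zero, sfun_succ] at hxy
      exact absurd hxy (Fin.castSucc_lt_last (g i)).ne
    | succ j =>
      rw [sfun_succ, sfun_succ] at hxy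
      rw [g.injective (Fin.castSucc_injective _ hxy)]

private noncomputable def sperm (m : ℕ) (g : Equiv.Perm (Fin m)) : Equiv.Perm (Fin (m + 1)) :=
  Equiv.ofBijective (sfun m g) (Finite.injective_iff_bijective.mp (sfun_inj m g))

private lemma sperm_apply (m : ℕ) (g : Equiv.Perm (Fin m)) (x : Fin (m + 1)) :
    sperm m g x = sfun m g x := rfl

private lemma sperm_eq_last (m : ℕ) (g : Equiv.Perm (Fin m)) (x : Fin (m + 1))
    (h : sperm m g x = Fin.last m) : x = 0 := by
  induction x using Fin.cases with
  | zero => rfl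
  | succ j =>
    rw [sperm_apply, sfun_succ] at h
    exact absurd h (Fin.castSucc_lt_last (g j)).ne

private noncomputable def BB (m : ℕ) (p : Fin (m + 1) × Equiv.Perm (Fin m)) : Equiv.Perm (Fin (m + 1)) :=
  (Equiv.addRight p.1).trans (sperm m p.2)

private lemma BB_apply (m : ℕ) (p : Fin (m + 1) × Equiv.Perm (Fin m)) (x : Fin (m + 1)) :
    BB m p x = sperm m p.2 (x + p.1) := rfl

private lemma BB_bij (m : ℕ) : Function.Bijective (BB m) := by
  rw [Fintype.bijective_iff_injective_and_card]
  constructor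
  · rintro ⟨c, g⟩ ⟨c', g'⟩ h
    have hx : ∀ x, sperm m g (x + c) = sperm m g' (x + c') := fun x => by
      rw [← BB_apply m (c, g), ← BB_apply m (c', g'), h]
    have hc : c = c' := by
      have h1 : sperm m g' (-c + c') = Fin.last m := by
        rw [← hx (-c)]
        simp [sperm_apply, sfun_zero]
      exact neg_add_eq_zero.mp (sperm_eq_last m g' _ h1)
    subst hc
    have hs : ∀ y, sperm m g y = sperm m g' y := fun y => by
      have := hx (y - c)
      simpa using this
    have hg : g = g' := by
      ext j
      have := hs j.succ
      rw [sperm_apply, sperm_apply, sfun_succ, sfun_succ] at this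
      exact Fin.val_eq_of_eq (Fin.castSucc_injective _ this)
    rw [hg]
  · simp [Fintype.card_perm, Nat.factorial_succ]

/-- Cyclic sum over all permutations: the index `i+1` is taken mod `k`,
i.e. `σ(k+1) := σ(1)`. -/
theorem statement15 (k : ℕ) (hk : 3 ≤ k) (z : Fin k → ℝ)
    (hz : Function.Injective z) :
    ∑ σ : Equiv.Perm (Fin k), ∏ i : Fin k,
      1 / (z (σ i) - z (σ ⟨(i.val + 1) % k, Nat.mod_lt _ (by omega)⟩)) = 0 := by
  obtain ⟨m, hm, rfl⟩ : ∃ m, 2 ≤ m ∧ k = m + 1 := ⟨k - 1, by omega, by omega⟩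
  haveI : NeZero m := ⟨by omega⟩
  have hidx : ∀ i : Fin (m + 1),
      (⟨(i.val + 1) % (m + 1), Nat.mod_lt _ (by omega)⟩ : Fin (m + 1)) = i + 1 := by
    intro i
    apply Fin.ext
    rw [Fin.add_def, Fin.val_one', Nat.mod_eq_of_lt (show 1 < m + 1 by omega)]
  simp only [hidx]
  set f : Fin (m + 1) → Fin (m + 1) → ℝ := fun a b => 1 / (z a - z b) with hf
  show ∑ σ : Equiv.Perm (Fin (m + 1)), ∏ i, f (σ i) (σ (i + 1)) = 0
  set L : Fin (m + 1) := Fin.last m with hL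
  set jm : Fin m := ⟨m - 1, by omega⟩ with hjm
  have hjm1 : jm + 1 = 0 := by
    apply Fin.ext
    simp only [Fin.val_add, Fin.val_one', Fin.val_zero]
    show (m - 1 + 1 % m) % m = 0
    rw [Nat.mod_eq_of_lt (show 1 < m by omega), show m - 1 + 1 = m by omega, Nat.mod_self]
  have hjm0 : jm ≠ 0 := by
    intro h
    have := Fin.val_eq_of_eq h
    rw [Fin.val_zero] at this
    simp only [hjm] at this
    omega
  have hsucc_add : ∀ j : Fin m, j ≠ jm → (j.succ + 1 : Fin (m + 1)) = (j + 1).succ := by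
    intro j hj
    have hjv : j.val < m - 1 := by
      have h1 := j.isLt
      have h2 : j.val ≠ m - 1 := fun h => hj (Fin.ext h)
      omega
    apply Fin.ext
    simp only [Fin.val_add, Fin.val_succ, Fin.val_one']
    rw [Nat.mod_eq_of_lt (show 1 < m + 1 by omega), Nat.mod_eq_of_lt (show 1 < m by omega),
      Nat.mod_eq_of_lt (show j.val + 1 + 1 < m + 1 by omega),
      Nat.mod_eq_of_lt (show j.val + 1 < m by omega)]
  have hjmsucc : (jm.succ + 1 : Fin (m + 1)) = 0 := by
    apply Fin.ext
    simp only [Fin.val_add, Fin.val_succ, Fin.val_one', Fin.val_zero]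
    show (m - 1 + 1 + 1 % (m + 1)) % (m + 1) = 0
    rw [Nat.mod_eq_of_lt (show 1 < m + 1 by omega), show m - 1 + 1 + 1 = m + 1 by omega,
      Nat.mod_self]
  have h01 : ((0 : Fin (m + 1)) + 1) = (0 : Fin m).succ := by
    apply Fin.ext
    simp only [Fin.val_add, Fin.val_succ, Fin.val_one', Fin.val_zero, Fin.val_zero]
    rw [Nat.mod_eq_of_lt (show 1 < m + 1 by omega),
      Nat.mod_eq_of_lt (show 0 + 1 < m + 1 by omega)]
  set u : Fin m → ℝ := fun c => 1 / (z (Fin.castSucc c) - z L) with hu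
  set G : Equiv.Perm (Fin m) → ℝ :=
    fun g => ∏ j : Fin m, f (Fin.castSucc (g j)) (Fin.castSucc (g (j + 1))) with hG
  -- Step B: evaluate the cyclic product of a normalized permutation
  have key : ∀ g : Equiv.Perm (Fin m),
      (∏ i : Fin (m + 1), f (sperm m g i) (sperm m g (i + 1)))
        = G g * (u (g jm) - u (g 0)) := by
    intro g
    have split1 : (∏ i : Fin (m + 1), f (sperm m g i) (sperm m g (i + 1)))
        = f L (Fin.castSucc (g 0))
          * ∏ j : Fin m, f (Fin.castSucc (g j)) (sperm m g (j.succ + 1)) := by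
      rw [Fin.prod_univ_succ]
      congr 1
      · rw [sperm_apply, sfun_zero, h01, sperm_apply, sfun_succ]
    have split2 : (∏ j : Fin m, f (Fin.castSucc (g j)) (sperm m g (j.succ + 1)))
        = f (Fin.castSucc (g jm)) L
          * ∏ j ∈ Finset.univ.erase jm,
              f (Fin.castSucc (g j)) (Fin.castSucc (g (j + 1))) := by
      rw [← Finset.mul_prod_erase Finset.univ _ (Finset.mem_univ jm)]
      congr 1
      · rw [hjmsucc, sperm_apply, sfun_zero]
      · refine Finset.prod_congr rfl fun j hj => ?_
        rw [hsucc_add j (Finset.ne_of_mem_erase hj), sperm_apply, sfun_succ]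
    have split3 : G g
        = f (Fin.castSucc (g jm)) (Fin.castSucc (g 0))
          * ∏ j ∈ Finset.univ.erase jm,
              f (Fin.castSucc (g j)) (Fin.castSucc (g (j + 1))) := by
      simp only [hG]
      rw [← Finset.mul_prod_erase Finset.univ _ (Finset.mem_univ jm), hjm1]
    have hfrac : f (Fin.castSucc (g jm)) L * f L (Fin.castSucc (g 0))
        = f (Fin.castSucc (g jm)) (Fin.castSucc (g 0)) * (u (g jm) - u (g 0)) := by
      have hne : g jm ≠ g 0 := fun h => hjm0 (g.injective h)
      have h1 : z (Fin.castSucc (g jm)) ≠ z (Fin.castSucc (g 0)) :=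
        fun h => hne (Fin.castSucc_injective _ (hz h))
      have h2 : z (Fin.castSucc (g jm)) ≠ z L :=
        fun h => (Fin.castSucc_lt_last (g jm)).ne (hz h)
      have h3 : z (Fin.castSucc (g 0)) ≠ z L :=
        fun h => (Fin.castSucc_lt_last (g 0)).ne (hz h)
      exact partial_frac _ _ _ h1 h2 h3
    rw [split1, split2, split3]
    calc f L (Fin.castSucc (g 0)) * (f (Fin.castSucc (g jm)) L
            * ∏ j ∈ Finset.univ.erase jm,
                f (Fin.castSucc (g j)) (Fin.castSucc (g (j + 1))))
        = (f (Fin.castSucc (g jm)) L * f L (Fin.castSucc (g 0)))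
            * ∏ j ∈ Finset.univ.erase jm,
                f (Fin.castSucc (g j)) (Fin.castSucc (g (j + 1))) := by ring
      _ = _ := by rw [hfrac]; ring
  -- Step C: the sum over normalized permutations vanishes
  have sumT : ∑ g : Equiv.Perm (Fin m),
      (∏ i : Fin (m + 1), f (sperm m g i) (sperm m g (i + 1))) = 0 := by
    simp only [key, mul_sub]
    rw [Finset.sum_sub_distrib]
    have hrot : ∑ g : Equiv.Perm (Fin m), G g * u (g jm)
        = ∑ g : Equiv.Perm (Fin m), G g * u (g 0) := by
      refine Fintype.sum_equiv
        (Equiv.mulRight ((Equiv.addRight jm : Equiv.Perm (Fin m)))) _ _ fun g => ?_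
      have hG' : G (g * (Equiv.addRight jm : Equiv.Perm (Fin m))) = G g := by
        simp only [hG]
        rw [← cyc_prod (fun a b => f (Fin.castSucc a) (Fin.castSucc b)) (⇑g) jm]
        refine Finset.prod_congr rfl fun j _ => ?_
        have e1 : (g * (Equiv.addRight jm : Equiv.Perm (Fin m))) j = g (j + jm) := by
          simp [Equiv.Perm.mul_apply]
        have e2 : (g * (Equiv.addRight jm : Equiv.Perm (Fin m))) (j + 1) = g (j + jm + 1) := by
          simp [Equiv.Perm.mul_apply, add_right_comm]
        rw [e1, e2]
      have e3 : ((Equiv.mulRight ((Equiv.addRight jm : Equiv.Perm (Fin m)))) g) 0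
          = g jm := by
        simp [Equiv.Perm.mul_apply]
      have e4 : (Equiv.mulRight ((Equiv.addRight jm : Equiv.Perm (Fin m)))) g
          = g * (Equiv.addRight jm : Equiv.Perm (Fin m)) := rfl
      rw [e4] at e3 ⊢
      rw [hG', e3]
    rw [hrot, sub_self]
  -- Step A: reindex the full sum by (rotation, normalized permutation)
  rw [← Fintype.sum_bijective (BB m) (BB_bij m)
      (fun p => ∏ i, f (BB m p i) (BB m p (i + 1)))
      (fun σ => ∏ i, f (σ i) (σ (i + 1))) (fun p => rfl)]
  rw [Fintype.sum_prod_type]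
  have hBBval : ∀ (c : Fin (m + 1)) (g : Equiv.Perm (Fin m)),
      (∏ i, f (BB m (c, g) i) (BB m (c, g) (i + 1)))
        = ∏ i, f (sperm m g i) (sperm m g (i + 1)) := by
    intro c g
    rw [← cyc_prod (fun a b => f a b) (⇑(sperm m g)) c]
    refine Finset.prod_congr rfl fun i _ => ?_
    rw [BB_apply, BB_apply]
    congr 2
    exact add_right_comm i 1 c
  simp only [hBBval, sumT, Finset.sum_const_zero]
end
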